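/- arXiv:1402.2775 — 5 statements merged into one kernel-verified Lean document; each statement's English description precedes it below -/
import Mathlib

section
/- Let X = (X_1, X_2, …) be a random element of the real Hilbert space ℓ² with ∑_{k=1}^∞ E(X_k²) < ∞ and law μ. Let Y = (Y_1, Y_2, …) be the residual sequence of X, with τ_k² = E(Y_k²) > 0 for all k ≥ 1. Assume Y is α-mixing with mixing coefficients {α_k} satisfying ∑_{k=1}^∞ α_k^{1−1/(2p)} < ∞ for some p ≥ 1, and sup_{k≥1} E[(Y_k/τ_k)^{2r}] < ∞ for some r > p. Then HD(x) = 0 for μ-almost every x ∈ ℓ². -/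
open MeasureTheory ProbabilityTheory ENNReal

/-- The half-space depth of `x` with respect to the probability measure `μ` on `ℓ²`:
`HD(x) = inf { P(⟨u, X − x⟩ ≥ 0) : u ∈ ℓ² }`. -/
noncomputable def halfSpaceDepth [MeasurableSpace (lp (fun _ : ℕ => ℝ) 2)]
    (μ : Measure (lp (fun _ : ℕ => ℝ) 2)) (x : lp (fun _ : ℕ => ℝ) 2) : ℝ≥0∞ :=
  ⨅ u : lp (fun _ : ℕ => ℝ) 2, μ {z | 0 ≤ inner (𝕜 := ℝ) u (z - x)}

section Aux

open Filter

lemma aux_integrable_mul {Ω : Type*} {mΩ : MeasurableSpace Ω} {μ : MeasureTheory.Measure Ω}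
    {f g : Ω → ℝ} (hf : MemLp f 2 μ) (hg : MemLp g 2 μ) :
    Integrable (fun z => f z * g z) μ := by
  have h12 : (1 : ℝ≥0∞) / 1 = 1 / 2 + 1 / 2 := by
    rw [div_one, ENNReal.div_add_div_same, one_add_one_eq_two,
      ENNReal.div_self two_ne_zero ENNReal.ofNat_ne_top]
  have h : MemLp (fun z => f z * g z) 1 μ := hg.smul hf
  rw [← memLp_one_iff_integrable]
  simpa [Pi.smul_apply, smul_eq_mul] using h

lemma aux_coord_continuous (k : ℕ) : Continuous fun z : lp (fun _ : ℕ => ℝ) 2 => z k := by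
  have h : LipschitzWith 1 fun z : lp (fun _ : ℕ => ℝ) 2 => z k := by
    apply LipschitzWith.of_dist_le_mul
    intro z w
    simp only [NNReal.coe_one, one_mul, dist_eq_norm]
    have h2 : ((z - w : lp (fun _ : ℕ => ℝ) 2) : ∀ _ : ℕ, ℝ) k = z k - w k := by
      rw [lp.coeFn_sub, Pi.sub_apply]
    calc ‖z k - w k‖ = ‖((z - w : lp (fun _ : ℕ => ℝ) 2) : ∀ _ : ℕ, ℝ) k‖ := by rw [h2]
    _ ≤ ‖z - w‖ := lp.norm_apply_le_norm (by norm_num) (z - w) k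
  exact h.continuous

lemma aux_pointwise {t K r : ℝ} (ht : 0 ≤ t) (hK : 1 ≤ K) (hr : 1 < r) :
    t ≤ min t K + t ^ r / K ^ (r - 1) := by
  have hK0 : (0:ℝ) < K := lt_of_lt_of_le one_pos hK
  rcases le_or_gt t K with h | h
  · rw [min_eq_left h]
    have h0 : 0 ≤ t ^ r / K ^ (r-1) := by positivity
    linarith
  · rw [min_eq_right h.le]
    have ht0 : 0 < t := lt_trans hK0 h
    have h1 : K ^ (r-1) ≤ t ^ (r-1) := Real.rpow_le_rpow hK0.le h.le (by linarith)
    have hKr : (0:ℝ) < K ^ (r-1) := by positivity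
    have htr : (0:ℝ) < t ^ (r-1) := by positivity
    have h2 : t ≤ t ^ r / K ^ (r-1) := by
      rw [le_div_iff₀ hKr]
      have : t * t ^ (r-1) = t ^ r := by
        rw [show t * t ^ (r-1) = t ^ (1:ℝ) * t ^ (r-1) by rw [Real.rpow_one],
          ← Real.rpow_add ht0]
        norm_num
      nlinarith [h1, ht0.le]
    linarith

end Aux

set_option maxHeartbeats 1600000 in
/-- Theorem 2.1 (half-space depth part): if the residual sequence `Y` of a random element `X`
of `ℓ²` (with summable coordinate second moments) is `α`-mixing with
`∑ α_k ^ (1 − 1/(2p)) < ∞` for some `p ≥ 1`, all residual variances `τ_k²` are positive, and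
`sup_k E[(Y_k/τ_k)^(2r)] < ∞` for some `r > p`, then `HD(x) = 0` for `μ`-a.e. `x`. -/
theorem halfSpaceDepth_ae_eq_zero
    [MeasurableSpace (lp (fun _ : ℕ => ℝ) 2)] [BorelSpace (lp (fun _ : ℕ => ℝ) 2)]
    (μ : Measure (lp (fun _ : ℕ => ℝ) 2)) [IsProbabilityMeasure μ]
    -- the coordinates of `X` have finite, summable second moments
    (hX2 : ∀ k : ℕ, Integrable (fun z : lp (fun _ : ℕ => ℝ) 2 => (z k) ^ 2) μ)
    (hXsum : Summable fun k : ℕ => ∫ z : lp (fun _ : ℕ => ℝ) 2, (z k) ^ 2 ∂μ)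
    -- `Y` is the residual sequence of `X`: `Y_k = X_k - (best affine predictor from X_0,…,X_{k-1})`,
    -- characterized by `Y_k` having zero mean and being orthogonal to `X_j`, `j < k`
    (Y : ℕ → lp (fun _ : ℕ => ℝ) 2 → ℝ) (b : ℕ → ℝ) (β : ℕ → ℕ → ℝ)
    (hYdef : ∀ k z, Y k z = z k - b k - ∑ j ∈ Finset.range k, β k j * z j)
    (hYmean : ∀ k, ∫ z, Y k z ∂μ = 0)
    (hYorth : ∀ k j, j < k → ∫ z, Y k z * z j ∂μ = 0)
    -- the residual variances `τ_k² = E(Y_k²)` are positive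
    (τ : ℕ → ℝ) (hτpos : ∀ k, 0 < τ k)
    (hτ : ∀ k, ∫ z, (Y k z) ^ 2 ∂μ = τ k ^ 2)
    -- `Y` is α-mixing with mixing coefficients `a`
    (a : ℕ → ℝ) (ha0 : ∀ k, 0 ≤ a k)
    (hmix : ∀ n k : ℕ, ∀ A B : Set (lp (fun _ : ℕ => ℝ) 2),
      MeasurableSet[⨆ i ∈ Finset.Iic n, MeasurableSpace.comap (Y i) (borel ℝ)] A →
      MeasurableSet[⨆ (i : ℕ) (_ : n + k ≤ i), MeasurableSpace.comap (Y i) (borel ℝ)] B →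
      |(μ (A ∩ B)).toReal - (μ A).toReal * (μ B).toReal| ≤ a k)
    (hmix0 : Filter.Tendsto a Filter.atTop (nhds 0))
    -- `∑ a_k^(1-1/2p) < ∞` for some `p ≥ 1`, and `sup_k E[(Y_k/τ_k)^(2r)] < ∞` for some `r > p`
    (p r : ℝ) (hp : 1 ≤ p) (hpr : p < r)
    (hasum : Summable fun k => a k ^ (1 - 1 / (2 * p)))
    (hmomInt : ∀ k, Integrable (fun z => |Y k z / τ k| ^ (2 * r)) μ)
    (hmom : ∃ C : ℝ, ∀ k, ∫ z, |Y k z / τ k| ^ (2 * r) ∂μ ≤ C) :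
    ∀ᵐ x ∂μ, halfSpaceDepth μ x = 0 := by
  classical
  obtain ⟨C, hC⟩ := hmom
  have hb : (Real.measurableSpace) = borel ℝ := BorelSpace.measurable_eq
  have hYeq : ∀ k, Y k = fun z => z k - b k - ∑ j ∈ Finset.range k, β k j * z j :=
    fun k => funext (hYdef k)
  have hYcont : ∀ k, Continuous (Y k) := by
    intro k; rw [hYeq k]
    exact ((aux_coord_continuous k).sub continuous_const).sub
      (continuous_finset_sum _ fun j _ => continuous_const.mul (aux_coord_continuous j))
  have hYmeas : ∀ k, Measurable (Y k) := fun k => (hYcont k).measurable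
  have memg : ∀ k, MemLp (fun z : lp (fun _ : ℕ => ℝ) 2 => z k) 2 μ := fun k =>
    (memLp_two_iff_integrable_sq (aux_coord_continuous k).aestronglyMeasurable).2 (hX2 k)
  have memY : ∀ k, MemLp (Y k) 2 μ := by
    intro k; rw [hYeq k]
    exact ((memg k).sub (memLp_const _)).sub
      (memLp_finset_sum _ fun j _ => ((memg j).const_mul _))
  have memW : ∀ k, MemLp (fun z => Y k z / τ k) 2 μ := by
    intro k
    have h := (memY k).const_mul (τ k)⁻¹
    have he : (fun z => (τ k)⁻¹ * Y k z) = fun z => Y k z / τ k := by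
      funext z; rw [div_eq_inv_mul]
    rwa [he] at h
  have intY : ∀ k, Integrable (Y k) μ := fun k => (memY k).integrable one_le_two
  have intYg : ∀ k j, Integrable (fun z => Y k z * z j) μ :=
    fun k j => aux_integrable_mul (memY k) (memg j)
  have intWW : ∀ k j, Integrable (fun z => (Y k z / τ k) * (Y j z / τ j)) μ :=
    fun k j => aux_integrable_mul (memW k) (memW j)
  have intW2 : ∀ k, Integrable (fun z => (Y k z / τ k) ^ 2) μ := by
    intro k
    have h := intWW k k
    have he : (fun z => (Y k z / τ k) * (Y k z / τ k)) = fun z => (Y k z / τ k) ^ 2 := by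
      funext z; rw [sq]
    rwa [he] at h
  -- orthogonality of the residuals
  have EYY : ∀ k j, j < k → ∫ z, Y k z * Y j z ∂μ = 0 := by
    intro k j hjk
    have hexp : (fun z => Y k z * Y j z)
        = fun z => Y k z * z j - b j * Y k z
          - ∑ i ∈ Finset.range j, β j i * (Y k z * z i) := by
      funext z
      rw [hYdef j z]
      rw [show (∑ i ∈ Finset.range j, β j i * (Y k z * z i))
          = Y k z * ∑ i ∈ Finset.range j, β j i * z i by
        rw [Finset.mul_sum]; exact Finset.sum_congr rfl fun i _ => by ring]
      ring
    have i3 : Integrable (fun z => Y k z * z j) μ := intYg k j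
    have i4 : Integrable (fun z => b j * Y k z) μ := (intY k).const_mul (b j)
    have i1 : Integrable (fun z => Y k z * z j - b j * Y k z) μ := i3.sub i4
    have i2 : Integrable (fun z => ∑ i ∈ Finset.range j, β j i * (Y k z * z i)) μ :=
      integrable_finset_sum _ fun i _ => ((intYg k i).const_mul _)
    rw [hexp, integral_sub i1 i2, integral_sub i3 i4,
      integral_finset_sum _ (fun i _ => ((intYg k i).const_mul _)),
      hYorth k j hjk, integral_const_mul, hYmean k,
      Finset.sum_eq_zero (fun i hi => by
        rw [integral_const_mul, hYorth k i ((Finset.mem_range.1 hi).trans hjk), mul_zero])]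
    simp
  have hWW : ∀ k j, j ≠ k → ∫ z, (Y k z / τ k) * (Y j z / τ j) ∂μ = 0 := by
    have key : ∀ k j, j < k → ∫ z, (Y k z / τ k) * (Y j z / τ j) ∂μ = 0 := by
      intro k j h
      have he : (fun z => (Y k z / τ k) * (Y j z / τ j))
          = fun z => (Y k z * Y j z) / (τ k * τ j) :=
        funext fun z => div_mul_div_comm _ _ _ _
      rw [he, integral_div, EYY k j h, zero_div]
    intro k j h
    rcases h.lt_or_gt with hlt | hgt
    · exact key k j hlt
    · have he : (fun z => (Y k z / τ k) * (Y j z / τ j))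
          = fun z => (Y j z / τ j) * (Y k z / τ k) := funext fun z => mul_comm _ _
      rw [he]; exact key j k hgt
  have hW2 : ∀ k, ∫ z, (Y k z / τ k) ^ 2 ∂μ = 1 := by
    intro k
    have he : (fun z => (Y k z / τ k) ^ 2) = fun z => (Y k z) ^ 2 / (τ k) ^ 2 :=
      funext fun z => div_pow _ _ _
    rw [he, integral_div, hτ k, div_self (pow_ne_zero _ (hτpos k).ne')]
  -- the tail event `B` of summability of the squared standardized residuals
  set B : Set (lp (fun _ : ℕ => ℝ) 2) := {z | Summable fun k => (Y k z / τ k) ^ 2} with hBdef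
  have hmge : ∀ m i, m ≤ i →
      Measurable[⨆ (i : ℕ) (_ : m ≤ i), MeasurableSpace.comap (Y i) (borel ℝ)] (Y i) := by
    intro m i hmi
    apply Measurable.of_comap_le
    rw [hb]
    exact le_iSup₂ (f := fun (i : ℕ) (_ : m ≤ i) => MeasurableSpace.comap (Y i) (borel ℝ)) i hmi
  have hBmge : ∀ m : ℕ,
      MeasurableSet[⨆ (i : ℕ) (_ : m ≤ i), MeasurableSpace.comap (Y i) (borel ℝ)] B := by
    intro m
    have hBeq : B = ⋃ M : ℕ, ⋂ n : ℕ,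
        {z | ∑ k ∈ Finset.range n, (Y (k + m) z / τ (k + m)) ^ 2 ≤ (M : ℝ)} := by
      ext z
      simp only [hBdef, Set.mem_setOf_eq, Set.mem_iUnion, Set.mem_iInter]
      constructor
      · intro hz
        have hz' : Summable fun k => (Y (k + m) z / τ (k + m)) ^ 2 :=
          (summable_nat_add_iff m).2 hz
        refine ⟨⌈∑' k, (Y (k + m) z / τ (k + m)) ^ 2⌉₊, fun n => ?_⟩
        exact le_trans (Summable.sum_le_tsum _ (fun i _ => sq_nonneg _) hz') (Nat.le_ceil _)
      · rintro ⟨M, hM⟩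
        exact (summable_nat_add_iff m).1
          (summable_of_sum_range_le (fun k => sq_nonneg _) hM)
    rw [hBeq]
    refine MeasurableSet.iUnion fun M => MeasurableSet.iInter fun n => ?_
    refine measurableSet_le (Finset.measurable_sum _ fun k _ => ?_) measurable_const
    exact ((hmge m (k + m) (Nat.le_add_left m k)).div_const _).pow_const 2
  have hcomaple : ∀ i : ℕ, MeasurableSpace.comap (Y i) (borel ℝ)
      ≤ (inferInstance : MeasurableSpace (lp (fun _ : ℕ => ℝ) 2)) := by
    intro i
    rw [← hb]
    exact (hYmeas i).comap_le
  have hBborel : MeasurableSet B := by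
    have h0 : (⨆ (i : ℕ) (_ : (0:ℕ) ≤ i), MeasurableSpace.comap (Y i) (borel ℝ))
        ≤ (inferInstance : MeasurableSpace (lp (fun _ : ℕ => ℝ) 2)) :=
      iSup₂_le fun i _ => hcomaple i
    exact h0 _ (hBmge 0)
  -- B is independent of everything, hence of itself
  have keyIndep : ∀ (n : ℕ) (A : Set (lp (fun _ : ℕ => ℝ) 2)),
      MeasurableSet[⨆ i ∈ Finset.Iic n, MeasurableSpace.comap (Y i) (borel ℝ)] A →
      μ (A ∩ B) = μ A * μ B := by
    intro n A hA
    have habs : ∀ k, |(μ (A ∩ B)).toReal - (μ A).toReal * (μ B).toReal| ≤ a k :=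
      fun k => hmix n k A B hA (hBmge (n + k))
    have h0 : |(μ (A ∩ B)).toReal - (μ A).toReal * (μ B).toReal| ≤ 0 :=
      ge_of_tendsto' hmix0 habs
    have heq : (μ (A ∩ B)).toReal = (μ A).toReal * (μ B).toReal :=
      sub_eq_zero.1 (abs_eq_zero.1 (le_antisymm h0 (abs_nonneg _)))
    refine (ENNReal.toReal_eq_toReal_iff' (measure_ne_top μ _)
      (ENNReal.mul_ne_top (measure_ne_top μ _) (measure_ne_top μ _))).1 ?_
    rw [ENNReal.toReal_mul]
    exact heq
  have hBB : μ B = μ B * μ B := by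
    have hmono : ∀ {n m : ℕ}, n ≤ m →
        (⨆ i ∈ Finset.Iic n, MeasurableSpace.comap (Y i) (borel ℝ))
          ≤ ⨆ i ∈ Finset.Iic m, MeasurableSpace.comap (Y i) (borel ℝ) := by
      intro n m hnm
      exact biSup_mono fun i hi => Finset.mem_Iic.2 ((Finset.mem_Iic.1 hi).trans hnm)
    have hpi : IsPiSystem (⋃ n : ℕ,
        {t | MeasurableSet[⨆ i ∈ Finset.Iic n, MeasurableSpace.comap (Y i) (borel ℝ)] t}) := by
      rintro s hs t ht -
      obtain ⟨n1, hs1⟩ := Set.mem_iUnion.1 hs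
      obtain ⟨n2, ht1⟩ := Set.mem_iUnion.1 ht
      exact Set.mem_iUnion.2 ⟨max n1 n2,
        (hmono (le_max_left n1 n2) _ hs1).inter (hmono (le_max_right n1 n2) _ ht1)⟩
    have hgen := (MeasurableSpace.generateFrom_iUnion_measurableSet
      (fun n : ℕ => ⨆ i ∈ Finset.Iic n, MeasurableSpace.comap (Y i) (borel ℝ))).symm
    have h1le : (⨆ n : ℕ, ⨆ i ∈ Finset.Iic n, MeasurableSpace.comap (Y i) (borel ℝ))
        ≤ (inferInstance : MeasurableSpace (lp (fun _ : ℕ => ℝ) 2)) :=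
      iSup_le fun n => iSup₂_le fun i _ => hcomaple i
    have h2le : MeasurableSpace.generateFrom {B}
        ≤ (inferInstance : MeasurableSpace (lp (fun _ : ℕ => ℝ) 2)) := by
      refine MeasurableSpace.generateFrom_le ?_
      rintro t ht
      rw [Set.mem_singleton_iff] at ht
      rw [ht]; exact hBborel
    have hindepsets : IndepSets (⋃ n : ℕ,
        {t | MeasurableSet[⨆ i ∈ Finset.Iic n, MeasurableSpace.comap (Y i) (borel ℝ)] t})
        {B} μ := by
      rw [IndepSets_iff]
      rintro t1 t2 ht1 ht2
      rw [Set.mem_singleton_iff] at ht2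
      subst ht2
      obtain ⟨n, ht1'⟩ := Set.mem_iUnion.1 ht1
      exact keyIndep n t1 ht1'
    have hindep : Indep
        (⨆ n : ℕ, ⨆ i ∈ Finset.Iic n, MeasurableSpace.comap (Y i) (borel ℝ))
        (MeasurableSpace.generateFrom {B}) μ :=
      IndepSets.indep h1le h2le hpi (IsPiSystem.singleton B) hgen rfl hindepsets
    have hBsup : MeasurableSet[⨆ n : ℕ, ⨆ i ∈ Finset.Iic n,
        MeasurableSpace.comap (Y i) (borel ℝ)] B := by
      have hle0 : (⨆ (i : ℕ) (_ : (0:ℕ) ≤ i), MeasurableSpace.comap (Y i) (borel ℝ))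
          ≤ ⨆ n : ℕ, ⨆ i ∈ Finset.Iic n, MeasurableSpace.comap (Y i) (borel ℝ) :=
        iSup₂_le fun i _ => le_iSup_of_le i
          (le_iSup₂ (f := fun (j : ℕ) (_ : j ∈ Finset.Iic i) =>
            MeasurableSpace.comap (Y j) (borel ℝ)) i (Finset.mem_Iic.2 le_rfl))
      exact hle0 _ (hBmge 0)
    have hfinal := (Indep_iff _ _ _).1 hindep B B hBsup
      (MeasurableSpace.measurableSet_generateFrom (Set.mem_singleton B))
    rwa [Set.inter_self] at hfinal
  -- rule out μ B = 1 by uniform integrability of the squared standardized residuals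
  have hC0 : (0:ℝ) ≤ C := le_trans (integral_nonneg fun z => by positivity) (hC 0)
  have hr1 : (1:ℝ) < r := lt_of_le_of_lt hp hpr
  have hBne1 : μ B ≠ 1 := by
    intro h1
    have haeB : ∀ᵐ z ∂μ, z ∈ B := by
      have hcz : μ Bᶜ = 0 := by
        rw [measure_compl hBborel (measure_ne_top μ _), h1, measure_univ, tsub_self]
      filter_upwards [measure_eq_zero_iff_ae_notMem.1 hcz] with z hz
      simpa using hz
    set K : ℝ := max 1 ((2 * C + 1) ^ (1 / (r - 1))) with hKdef
    have hK1 : (1:ℝ) ≤ K := le_max_left _ _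
    have hK0 : (0:ℝ) < K := lt_of_lt_of_le one_pos hK1
    have hKpow : 2 * C + 1 ≤ K ^ (r - 1) := by
      have h2 : (2 * C + 1) ^ (1 / (r - 1)) ≤ K := le_max_right _ _
      calc 2 * C + 1 = ((2 * C + 1) ^ (1 / (r - 1))) ^ (r - 1) := by
            rw [← Real.rpow_mul (by linarith : (0:ℝ) ≤ 2 * C + 1),
              one_div_mul_cancel (by linarith : r - 1 ≠ 0), Real.rpow_one]
      _ ≤ K ^ (r - 1) := Real.rpow_le_rpow (by positivity) h2 (by linarith)
    have hgr_eq : ∀ k, (fun z => ((Y k z / τ k) ^ 2) ^ r)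
        = fun z => |Y k z / τ k| ^ (2 * r) := by
      intro k; funext z
      rw [← sq_abs, ← Real.rpow_natCast |Y k z / τ k| 2, ← Real.rpow_mul (abs_nonneg _)]
      norm_num
    have hgrint : ∀ k, Integrable (fun z => ((Y k z / τ k) ^ 2) ^ r) μ := by
      intro k; rw [hgr_eq k]; exact hmomInt k
    have hgrC : ∀ k, ∫ z, ((Y k z / τ k) ^ 2) ^ r ∂μ ≤ C := by
      intro k; rw [hgr_eq k]; exact hC k
    have hmin_int : ∀ k, Integrable (fun z => min ((Y k z / τ k) ^ 2) K) μ := by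
      intro k
      refine Integrable.mono (intW2 k)
        ((((hYmeas k).div_const _).pow_const 2).min measurable_const).aestronglyMeasurable ?_
      refine Filter.Eventually.of_forall fun z => ?_
      rw [Real.norm_eq_abs, Real.norm_eq_abs, abs_of_nonneg (le_min (sq_nonneg _) hK0.le),
        abs_of_nonneg (sq_nonneg _)]
      exact min_le_left _ _
    have hbound : ∀ k, (1:ℝ) ≤ (∫ z, min ((Y k z / τ k) ^ 2) K ∂μ) + 1 / 2 := by
      intro k
      have hptwise : ∀ z, (Y k z / τ k) ^ 2
          ≤ min ((Y k z / τ k) ^ 2) K + ((Y k z / τ k) ^ 2) ^ r / K ^ (r - 1) :=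
        fun z => aux_pointwise (sq_nonneg _) hK1 hr1
      have hint2 : Integrable (fun z => min ((Y k z / τ k) ^ 2) K
          + ((Y k z / τ k) ^ 2) ^ r / K ^ (r - 1)) μ :=
        (hmin_int k).add ((hgrint k).div_const _)
      have h3 := integral_mono (intW2 k) hint2 hptwise
      rw [hW2 k, integral_add (hmin_int k) ((hgrint k).div_const _), integral_div] at h3
      have h4 : (∫ z, ((Y k z / τ k) ^ 2) ^ r ∂μ) / K ^ (r - 1) ≤ 1 / 2 := by
        have hKrpos : (0:ℝ) < K ^ (r - 1) := by positivity
        rw [div_le_iff₀ hKrpos]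
        nlinarith [hgrC k, hKpow, hC0]
      linarith
    have hdct : Filter.Tendsto (fun k => ∫ z, min ((Y k z / τ k) ^ 2) K ∂μ)
        Filter.atTop (nhds 0) := by
      have hh := tendsto_integral_of_dominated_convergence (μ := μ)
        (F := fun k z => min ((Y k z / τ k) ^ 2) K) (f := fun _ => (0:ℝ)) (fun _ => K)
        (fun k => ((((hYmeas k).div_const _).pow_const 2).min
          measurable_const).aestronglyMeasurable)
        (integrable_const K)
        (fun k => Filter.Eventually.of_forall fun z => by
          rw [Real.norm_eq_abs, abs_of_nonneg (le_min (sq_nonneg _) hK0.le)]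
          exact min_le_right _ _)
        (by
          filter_upwards [haeB] with z hz
          have hz' : Summable fun k => (Y k z / τ k) ^ 2 := hz
          have ht := hz'.tendsto_atTop_zero
          have hmin := ht.min (tendsto_const_nhds (x := K))
          simpa [min_eq_left hK0.le] using hmin)
      simpa using hh
    obtain ⟨k, hk⟩ := (hdct.eventually_lt_const (by norm_num : (0:ℝ) < 1/4)).exists
    have hbk := hbound k
    linarith
  -- hence μ B = 0
  have hB0 : μ B = 0 := by
    have htr : (μ B).toReal = (μ B).toReal * (μ B).toReal := by
      rw [← ENNReal.toReal_mul, ← hBB]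
    have hfac : (μ B).toReal * ((μ B).toReal - 1) = 0 := by linear_combination -htr
    rcases mul_eq_zero.1 hfac with h | h
    · rcases (ENNReal.toReal_eq_zero_iff _).1 h with h' | h'
      · exact h'
      · exact absurd h' (measure_ne_top μ B)
    · exact absurd (((μ B).toReal_eq_one_iff).1 (by linarith)) hBne1
  -- main conclusion
  filter_upwards [measure_eq_zero_iff_ae_notMem.1 hB0] with x hx
  have hdiv : Filter.Tendsto (fun n => ∑ k ∈ Finset.range n, (Y k x / τ k) ^ 2)
      Filter.atTop Filter.atTop :=
    (not_summable_iff_tendsto_nat_atTop_of_nonneg (fun k => sq_nonneg _)).1 hx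
  have main : ∀ n : ℕ, 0 < (∑ k ∈ Finset.range n, (Y k x / τ k) ^ 2) →
      halfSpaceDepth μ x
        ≤ ENNReal.ofReal (1 / ∑ k ∈ Finset.range n, (Y k x / τ k) ^ 2) := by
    intro n hR
    set u : lp (fun _ : ℕ => ℝ) 2 := ∑ k ∈ Finset.range n, ((Y k x / τ k) * (τ k)⁻¹) •
      (lp.single 2 k (1:ℝ) - ∑ j ∈ Finset.range k, β k j • lp.single 2 j (1:ℝ)) with hudef
    have hsingle : ∀ (j : ℕ) (cc : ℝ) (w : lp (fun _ : ℕ => ℝ) 2),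
        inner (𝕜 := ℝ) (lp.single 2 j cc) w = cc * w j := by
      intro j cc w
      rw [lp.inner_single_left]
      simp [RCLike.inner_apply, mul_comm]
    have hv : ∀ (k : ℕ) (w : lp (fun _ : ℕ => ℝ) 2),
        inner (𝕜 := ℝ) (lp.single 2 k (1:ℝ)
          - ∑ j ∈ Finset.range k, β k j • lp.single 2 j (1:ℝ)) w
          = w k - ∑ j ∈ Finset.range k, β k j * w j := by
      intro k w
      rw [inner_sub_left, sum_inner, hsingle k 1 w, one_mul]
      congr 1
      refine Finset.sum_congr rfl fun j _ => ?_
      rw [real_inner_smul_left, hsingle j 1 w, one_mul]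
    have hzx : ∀ (z : lp (fun _ : ℕ => ℝ) 2) (j : ℕ),
        ((z - x : lp (fun _ : ℕ => ℝ) 2) : ∀ _ : ℕ, ℝ) j = z j - x j :=
      fun z j => by rw [lp.coeFn_sub, Pi.sub_apply]
    have hvY : ∀ (k : ℕ) (z : lp (fun _ : ℕ => ℝ) 2),
        inner (𝕜 := ℝ) (lp.single 2 k (1:ℝ)
          - ∑ j ∈ Finset.range k, β k j • lp.single 2 j (1:ℝ)) (z - x)
          = Y k z - Y k x := by
      intro k z
      rw [hv k (z - x)]
      simp only [hzx z]
      rw [hYdef k z, hYdef k x,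
        show (∑ j ∈ Finset.range k, β k j * (z j - x j))
          = ∑ j ∈ Finset.range k, (β k j * z j - β k j * x j) from
          Finset.sum_congr rfl fun j _ => mul_sub _ _ _,
        Finset.sum_sub_distrib]
      ring
    have hinner : ∀ z : lp (fun _ : ℕ => ℝ) 2, inner (𝕜 := ℝ) u (z - x)
        = (∑ k ∈ Finset.range n, (Y k x / τ k) * (Y k z / τ k))
          - ∑ k ∈ Finset.range n, (Y k x / τ k) ^ 2 := by
      intro z
      rw [hudef, sum_inner]
      have hterm : ∀ k ∈ Finset.range n,
          inner (𝕜 := ℝ) (((Y k x / τ k) * (τ k)⁻¹) • (lp.single 2 k (1:ℝ)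
            - ∑ j ∈ Finset.range k, β k j • lp.single 2 j (1:ℝ))) (z - x)
            = (Y k x / τ k) * (Y k z / τ k) - (Y k x / τ k) ^ 2 := by
        intro k _
        rw [real_inner_smul_left, hvY k z]
        ring
      rw [Finset.sum_congr rfl hterm, Finset.sum_sub_distrib]
    have hexp : (fun z => (∑ k ∈ Finset.range n, (Y k x / τ k) * (Y k z / τ k)) ^ 2)
        = fun z => ∑ k ∈ Finset.range n, ∑ j ∈ Finset.range n,
            ((Y k x / τ k) * (Y j x / τ j)) * ((Y k z / τ k) * (Y j z / τ j)) := by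
      funext z
      rw [sq, Finset.sum_mul_sum]
      exact Finset.sum_congr rfl fun k _ => Finset.sum_congr rfl fun j _ => by ring
    have hT2 : ∫ z, (∑ k ∈ Finset.range n, (Y k x / τ k) * (Y k z / τ k)) ^ 2 ∂μ
        = ∑ k ∈ Finset.range n, (Y k x / τ k) ^ 2 := by
      rw [hexp, integral_finset_sum _ fun k _ =>
        integrable_finset_sum _ fun j _ => ((intWW k j).const_mul _)]
      have hkk : ∀ k ∈ Finset.range n,
          (∫ z, ∑ j ∈ Finset.range n,
            ((Y k x / τ k) * (Y j x / τ j)) * ((Y k z / τ k) * (Y j z / τ j)) ∂μ)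
            = (Y k x / τ k) ^ 2 := by
        intro k hk
        rw [integral_finset_sum _ fun j _ => ((intWW k j).const_mul _)]
        rw [Finset.sum_eq_single_of_mem k hk (fun j _ hj => by
          rw [integral_const_mul, hWW k j hj, mul_zero])]
        rw [integral_const_mul,
          show (fun z => (Y k z / τ k) * (Y k z / τ k)) = fun z => (Y k z / τ k) ^ 2 from
            funext fun z => (sq _).symm,
          hW2 k]
        ring
      rw [Finset.sum_congr rfl hkk]
    have hTint : Integrable
        (fun z => (∑ k ∈ Finset.range n, (Y k x / τ k) * (Y k z / τ k)) ^ 2) μ := by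
      rw [hexp]
      exact integrable_finset_sum _ fun k _ =>
        integrable_finset_sum _ fun j _ => ((intWW k j).const_mul _)
    have hmarkov := mul_meas_ge_le_integral_of_nonneg
      (Filter.Eventually.of_forall fun z => sq_nonneg
        (∑ k ∈ Finset.range n, (Y k x / τ k) * (Y k z / τ k))) hTint
      ((∑ k ∈ Finset.range n, (Y k x / τ k) ^ 2) ^ 2)
    rw [hT2, measureReal_def] at hmarkov
    have hset : {z : lp (fun _ : ℕ => ℝ) 2 | 0 ≤ inner (𝕜 := ℝ) u (z - x)}
        ⊆ {z : lp (fun _ : ℕ => ℝ) 2 | (∑ k ∈ Finset.range n, (Y k x / τ k) ^ 2) ^ 2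
            ≤ (∑ k ∈ Finset.range n, (Y k x / τ k) * (Y k z / τ k)) ^ 2} := by
      intro z hz
      simp only [Set.mem_setOf_eq] at hz ⊢
      rw [hinner z] at hz
      have h1 : (∑ k ∈ Finset.range n, (Y k x / τ k) ^ 2)
          ≤ ∑ k ∈ Finset.range n, (Y k x / τ k) * (Y k z / τ k) := by linarith
      exact pow_le_pow_left₀ hR.le h1 2
    have hfin : μ {z : lp (fun _ : ℕ => ℝ) 2 |
        (∑ k ∈ Finset.range n, (Y k x / τ k) ^ 2) ^ 2
          ≤ (∑ k ∈ Finset.range n, (Y k x / τ k) * (Y k z / τ k)) ^ 2} ≠ ⊤ :=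
      measure_ne_top μ _
    have htoReal : (μ {z : lp (fun _ : ℕ => ℝ) 2 |
        (∑ k ∈ Finset.range n, (Y k x / τ k) ^ 2) ^ 2
          ≤ (∑ k ∈ Finset.range n, (Y k x / τ k) * (Y k z / τ k)) ^ 2}).toReal
        ≤ 1 / (∑ k ∈ Finset.range n, (Y k x / τ k) ^ 2) := by
      rw [le_div_iff₀ hR]
      nlinarith [hmarkov, hR, ENNReal.toReal_nonneg (a := μ {z : lp (fun _ : ℕ => ℝ) 2 |
        (∑ k ∈ Finset.range n, (Y k x / τ k) ^ 2) ^ 2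
          ≤ (∑ k ∈ Finset.range n, (Y k x / τ k) * (Y k z / τ k)) ^ 2})]
    calc halfSpaceDepth μ x ≤ μ {z : lp (fun _ : ℕ => ℝ) 2 | 0 ≤ inner (𝕜 := ℝ) u (z - x)} :=
          iInf_le _ u
    _ ≤ μ {z : lp (fun _ : ℕ => ℝ) 2 | (∑ k ∈ Finset.range n, (Y k x / τ k) ^ 2) ^ 2
          ≤ (∑ k ∈ Finset.range n, (Y k x / τ k) * (Y k z / τ k)) ^ 2} := measure_mono hset
    _ = ENNReal.ofReal ((μ {z : lp (fun _ : ℕ => ℝ) 2 |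
          (∑ k ∈ Finset.range n, (Y k x / τ k) ^ 2) ^ 2
          ≤ (∑ k ∈ Finset.range n, (Y k x / τ k) * (Y k z / τ k)) ^ 2}).toReal) :=
        (ENNReal.ofReal_toReal hfin).symm
    _ ≤ ENNReal.ofReal (1 / ∑ k ∈ Finset.range n, (Y k x / τ k) ^ 2) :=
        ENNReal.ofReal_le_ofReal htoReal
  refine le_antisymm ?_ zero_le
  refine ENNReal.le_of_forall_pos_le_add fun ε hε _ => ?_
  rw [zero_add]
  obtain ⟨n, hn⟩ := (hdiv.eventually_ge_atTop (max 1 (ε : ℝ)⁻¹)).exists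
  have hRpos : 0 < ∑ k ∈ Finset.range n, (Y k x / τ k) ^ 2 :=
    lt_of_lt_of_le (lt_of_lt_of_le one_pos (le_max_left _ _)) hn
  refine le_trans (main n hRpos) ?_
  rw [show ((ε : ℝ≥0∞)) = ENNReal.ofReal (ε : ℝ) from (ENNReal.ofReal_coe_nnreal).symm]
  refine ENNReal.ofReal_le_ofReal ?_
  have hε' : (0:ℝ) < ε := hε
  have h2 : (ε : ℝ)⁻¹ ≤ ∑ k ∈ Finset.range n, (Y k x / τ k) ^ 2 :=
    le_trans (le_max_right _ _) hn
  rw [div_le_iff₀ hRpos]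
  calc (1:ℝ) = (ε : ℝ) * (ε : ℝ)⁻¹ := (mul_inv_cancel₀ hε'.ne').symm
  _ ≤ (ε : ℝ) * ∑ k ∈ Finset.range n, (Y k x / τ k) ^ 2 :=
      mul_le_mul_of_nonneg_left h2 hε'.le
end

section
/- Let Y = (Y_1, Y_2, …) be a random element of the real Hilbert space ℓ² whose coordinates have zero means, are pairwise uncorrelated, and have variances τ_k² = E(Y_k²) ∈ (0, ∞). Then for every y = (y_1, y_2, …) ∈ ℓ² and every d ≥ 1 with ∑_{k=1}^d y_k²/τ_k² > 0, the half-space depth of y with respect to the law of Y satisfies HD(y) ≤ (∑_{k=1}^d y_k²/τ_k²)^{-1}. -/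
open MeasureTheory ENNReal

/-- If the coordinates of a random element `Y` of `ℓ²` (with law `μ`) have zero means, are
pairwise uncorrelated, and have variances `τ_k² ∈ (0,∞)`, then for every `y ∈ ℓ²` and every
`d ≥ 1` with `∑_{k<d} y_k²/τ_k² > 0`, we have `HD(y) ≤ (∑_{k<d} y_k²/τ_k²)⁻¹`. -/
theorem halfSpaceDepth_le
    [MeasurableSpace (lp (fun _ : ℕ => ℝ) 2)] [BorelSpace (lp (fun _ : ℕ => ℝ) 2)]
    (μ : Measure (lp (fun _ : ℕ => ℝ) 2)) [IsProbabilityMeasure μ]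
    (hint1 : ∀ k : ℕ, Integrable (fun z : lp (fun _ : ℕ => ℝ) 2 => z k) μ)
    (hint2 : ∀ k l : ℕ, Integrable (fun z : lp (fun _ : ℕ => ℝ) 2 => z k * z l) μ)
    (hmean : ∀ k : ℕ, ∫ z, z k ∂μ = 0)
    (huncorr : ∀ k l : ℕ, k ≠ l → ∫ z, z k * z l ∂μ = 0)
    (τ : ℕ → ℝ) (hτpos : ∀ k, 0 < τ k)
    (hτ : ∀ k, ∫ z, (z k) ^ 2 ∂μ = τ k ^ 2)
    (y : lp (fun _ : ℕ => ℝ) 2) (d : ℕ) (hd1 : 1 ≤ d)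
    (hpos : 0 < ∑ k ∈ Finset.range d, y k ^ 2 / τ k ^ 2) :
    halfSpaceDepth μ y ≤ ENNReal.ofReal ((∑ k ∈ Finset.range d, y k ^ 2 / τ k ^ 2)⁻¹) := by
  classical
  set S : ℝ := ∑ k ∈ Finset.range d, y k ^ 2 / τ k ^ 2 with hS
  set c : ℕ → ℝ := fun k => y k / τ k ^ 2 with hc
  set u : lp (fun _ : ℕ => ℝ) 2 := ∑ k ∈ Finset.range d, lp.single 2 k (c k) with hu
  set T : lp (fun _ : ℕ => ℝ) 2 → ℝ := fun z => ∑ k ∈ Finset.range d, c k * z k with hT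
  -- inner product formula
  have hinner : ∀ w : lp (fun _ : ℕ => ℝ) 2,
      inner (𝕜 := ℝ) u w = ∑ k ∈ Finset.range d, c k * w k := by
    intro w
    rw [hu, sum_inner]
    refine Finset.sum_congr rfl fun k _ => ?_
    rw [lp.inner_single_left]
    simp [RCLike.inner_apply]
    ring
  -- the event
  have hevent : {z : lp (fun _ : ℕ => ℝ) 2 | 0 ≤ inner (𝕜 := ℝ) u (z - y)}
      = {z | S ≤ T z} := by
    ext z
    simp only [Set.mem_setOf_eq, hinner]
    have : ∑ k ∈ Finset.range d, c k * (z - y) k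
        = T z - S := by
      rw [hT, hS, ← Finset.sum_sub_distrib]
      refine Finset.sum_congr rfl fun k _ => ?_
      have : (z - y) k = z k - y k := by
        simp [lp.coeFn_sub]
      rw [this, hc]
      have hτk := (hτpos k).ne'
      field_simp
    rw [this]
    constructor <;> intro h <;> linarith
  -- T squared as a double sum
  have hTsq : ∀ z : lp (fun _ : ℕ => ℝ) 2, (T z) ^ 2
      = ∑ k ∈ Finset.range d, ∑ l ∈ Finset.range d, (c k * c l) * (z k * z l) := by
    intro z
    rw [hT, sq, Finset.sum_mul_sum]
    exact Finset.sum_congr rfl fun k _ => Finset.sum_congr rfl fun l _ => by ring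
  -- integrability of T²
  have hTsq_int : Integrable (fun z => (T z) ^ 2) μ := by
    have : (fun z : lp (fun _ : ℕ => ℝ) 2 => (T z) ^ 2)
        = fun z => ∑ k ∈ Finset.range d, ∑ l ∈ Finset.range d,
            (c k * c l) * (z k * z l) := funext hTsq
    rw [this]
    exact integrable_finset_sum _ fun k _ =>
      integrable_finset_sum _ fun l _ => (hint2 k l).const_mul _
  -- ∫ T² = S
  have hTsq_integral : ∫ z, (T z) ^ 2 ∂μ = S := by
    have h1 : ∫ z, (T z) ^ 2 ∂μ = ∑ k ∈ Finset.range d, ∑ l ∈ Finset.range d,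
        (c k * c l) * ∫ z, z k * z l ∂μ := by
      simp_rw [hTsq]
      rw [integral_finset_sum _ fun k _ =>
        integrable_finset_sum _ fun l _ => (hint2 k l).const_mul _]
      refine Finset.sum_congr rfl fun k _ => ?_
      rw [integral_finset_sum _ fun l _ => (hint2 k l).const_mul _]
      exact Finset.sum_congr rfl fun l _ => integral_const_mul _ _
    rw [h1, hS]
    refine Finset.sum_congr rfl fun k hk => ?_
    rw [Finset.sum_eq_single_of_mem k hk]
    · have hsq : (fun z : lp (fun _ : ℕ => ℝ) 2 => z k * z k)
          = fun z => (z k) ^ 2 := by funext z; ring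
      rw [hsq, hτ k, hc]
      have hτk := (hτpos k).ne'
      field_simp
    · intro l _ hlk
      rw [huncorr k l (fun h => hlk h.symm), mul_zero]
  -- Markov inequality
  set A : Set (lp (fun _ : ℕ => ℝ) 2) := {z | S ^ 2 ≤ (T z) ^ 2} with hA
  have hmarkov : S ^ 2 * (μ A).toReal ≤ S := by
    have := mul_meas_ge_le_integral_of_nonneg
      (ae_of_all μ fun z => sq_nonneg (T z)) hTsq_int (S ^ 2)
    rwa [hTsq_integral] at this
  have hμA_ne_top : μ A ≠ ⊤ := (measure_lt_top μ A).ne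
  have hμA : (μ A).toReal ≤ S⁻¹ := by
    have hS2 : 0 < S ^ 2 := pow_pos hpos 2
    have h2 : (μ A).toReal ≤ S / S ^ 2 := by
      rw [le_div_iff₀' hS2]; exact hmarkov
    calc (μ A).toReal ≤ S / S ^ 2 := h2
      _ = S⁻¹ := by field_simp
  -- finish
  have hsub : {z : lp (fun _ : ℕ => ℝ) 2 | S ≤ T z} ⊆ A := by
    intro z hz
    exact pow_le_pow_left₀ hpos.le hz 2
  calc halfSpaceDepth μ y ≤ μ {z | 0 ≤ inner (𝕜 := ℝ) u (z - y)} := iInf_le _ u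
    _ = μ {z | S ≤ T z} := by rw [hevent]
    _ ≤ μ A := measure_mono hsub
    _ = ENNReal.ofReal ((μ A).toReal) := (ENNReal.ofReal_toReal hμA_ne_top).symm
    _ ≤ ENNReal.ofReal S⁻¹ := ENNReal.ofReal_le_ofReal hμA
end

section
/- Fix an integer J ≥ 2. Let X = (X_1, X_2, …) be an α-mixing sequence of real random variables whose mixing coefficients {α_k} satisfy ∑_{k=1}^∞ α_k^{1−1/(2p)} < ∞ for some p ≥ 1, and such that the distribution of X_k is non-atomic for each k ≥ 1. Let μ denote the law of X on ℝ^ℕ. Then BD(x) = 0 and HRD(x) = 0 for μ-almost every x. -/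
open MeasureTheory ENNReal

/-- The band depth of a sequence `x` with respect to a probability measure `μ` on `ℝ^ℕ`,
with `J` independent copies: `BD(x) = ∑_{j=2}^J P(min_{1≤i≤j} X_{i,k} ≤ x_k ≤ max_{1≤i≤j} X_{i,k}
for all k)`, realized via the product measure `μ^{⊗ J}`. -/
noncomputable def bandDepthSeq (μ : Measure (ℕ → ℝ)) [IsProbabilityMeasure μ] (J : ℕ)
    (x : ℕ → ℝ) : ℝ≥0∞ :=
  ∑ j ∈ Finset.Icc 2 J, (Measure.pi fun _ : Fin J => μ)
    {ω | ∀ k : ℕ, (∃ i : Fin J, (i : ℕ) < j ∧ ω i k ≤ x k) ∧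
                  (∃ i : Fin J, (i : ℕ) < j ∧ x k ≤ ω i k)}

/-- The half-region depth of a sequence `x` with respect to a probability measure `μ` on `ℝ^ℕ`:
`HRD(x) = min { P(X_k ≤ x_k ∀ k), P(X_k ≥ x_k ∀ k) }`. -/
noncomputable def halfRegionDepthSeq (μ : Measure (ℕ → ℝ)) (x : ℕ → ℝ) : ℝ≥0∞ :=
  min (μ {z | ∀ k : ℕ, z k ≤ x k}) (μ {z | ∀ k : ℕ, x k ≤ z k})


section Aux
open Set


def hsSet (b : Bool) (c : ℝ) : Set ℝ := if b then Set.Iic c else Set.Ici c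

lemma hsSet_borel (b : Bool) (c : ℝ) : MeasurableSet[borel ℝ] (hsSet b c) := by
  cases b <;> simp only [hsSet, if_true, if_false, Bool.false_eq_true]
  · rw [← Set.compl_Iio]
    exact (MeasurableSpace.measurableSet_generateFrom isOpen_Iio).compl
  · rw [← Set.compl_Ioi]
    exact (MeasurableSpace.measurableSet_generateFrom isOpen_Ioi).compl

lemma hsSet_meas (b : Bool) (c : ℝ) : MeasurableSet (hsSet b c) := by
  cases b <;> simp [hsSet]

lemma chain_le (μ : Measure (ℕ → ℝ)) [IsProbabilityMeasure μ] (a : ℕ → ℝ) (ha0 : ∀ k, 0 ≤ a k)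
    (hmix : ∀ n k : ℕ, ∀ A B : Set (ℕ → ℝ),
      MeasurableSet[⨆ i ∈ Finset.Iic n,
        MeasurableSpace.comap (fun z : ℕ → ℝ => z i) (borel ℝ)] A →
      MeasurableSet[⨆ (i : ℕ) (_ : n + k ≤ i),
        MeasurableSpace.comap (fun z : ℕ → ℝ => z i) (borel ℝ)] B →
      |(μ (A ∩ B)).toReal - (μ A).toReal * (μ B).toReal| ≤ a k)
    (d : ℕ) (k : ℕ → ℕ) (hk : ∀ t, k t + d ≤ k (t + 1))
    (As : ℕ → Set (ℕ → ℝ))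
    (hAs : ∀ t, MeasurableSet[MeasurableSpace.comap (fun z : ℕ → ℝ => z (k t)) (borel ℝ)] (As t))
    (m : ℕ) :
    (μ (⋂ t ∈ Finset.range m, As t)).toReal
      ≤ (∏ t ∈ Finset.range m, (μ (As t)).toReal) + m * a d := by
  have hkmono : Monotone k := monotone_nat_of_le_succ fun t => le_trans (Nat.le_add_right _ _) (hk t)
  induction m with
  | zero => simp
  | succ m ih =>
    rcases Nat.eq_zero_or_pos m with hm | hm
    · subst hm
      simp only [Finset.range_one, Finset.set_biInter_singleton, Finset.prod_singleton,
        Nat.cast_one, one_mul, Nat.cast_ofNat, Nat.zero_add]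
      nlinarith [ha0 d, ENNReal.toReal_nonneg (a := μ (As 0))]
    · obtain ⟨m', rfl⟩ : ∃ m', m = m' + 1 := ⟨m - 1, by omega⟩
      have hBig : (⋂ t ∈ Finset.range (m' + 1 + 1), As t)
          = (⋂ t ∈ Finset.range (m' + 1), As t) ∩ As (m' + 1) := by
        rw [Finset.range_add_one, Finset.set_biInter_insert, Set.inter_comm]
      have hpast : MeasurableSet[⨆ i ∈ Finset.Iic (k m'),
          MeasurableSpace.comap (fun z : ℕ → ℝ => z i) (borel ℝ)]
          (⋂ t ∈ Finset.range (m' + 1), As t) := by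
        refine Finset.measurableSet_biInter _ fun t ht => ?_
        have hle : MeasurableSpace.comap (fun z : ℕ → ℝ => z (k t)) (borel ℝ)
            ≤ ⨆ i ∈ Finset.Iic (k m'),
              MeasurableSpace.comap (fun z : ℕ → ℝ => z i) (borel ℝ) := by
          refine le_iSup₂ (f := fun (i : ℕ) (_ : i ∈ Finset.Iic (k m')) =>
            MeasurableSpace.comap (fun z : ℕ → ℝ => z i) (borel ℝ)) (k t) ?_
          simp only [Finset.mem_Iic]
          exact hkmono (by simpa using Nat.lt_succ_iff.mp (Finset.mem_range.mp ht))
        exact hle _ (hAs t)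
      have hfut : MeasurableSet[⨆ (i : ℕ) (_ : k m' + d ≤ i),
          MeasurableSpace.comap (fun z : ℕ → ℝ => z i) (borel ℝ)] (As (m' + 1)) := by
        have hle : MeasurableSpace.comap (fun z : ℕ → ℝ => z (k (m' + 1))) (borel ℝ)
            ≤ ⨆ (i : ℕ) (_ : k m' + d ≤ i),
              MeasurableSpace.comap (fun z : ℕ → ℝ => z i) (borel ℝ) :=
          le_iSup₂ (f := fun (i : ℕ) (_ : k m' + d ≤ i) =>
            MeasurableSpace.comap (fun z : ℕ → ℝ => z i) (borel ℝ)) (k (m' + 1)) (hk m')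
        exact hle _ (hAs (m' + 1))
      have hbound := hmix (k m') d _ _ hpast hfut
      rw [← hBig] at hbound
      have h1 := (abs_le.mp hbound).2
      have h2 : (μ (⋂ t ∈ Finset.range (m' + 1), As t)).toReal
          ≤ (∏ t ∈ Finset.range (m' + 1), (μ (As t)).toReal) + (m' + 1) * a d := by
        push_cast at ih ⊢; exact ih
      have hAle1 : (μ (As (m' + 1))).toReal ≤ 1 := by
        rw [← ENNReal.toReal_one]
        exact ENNReal.toReal_mono one_ne_top prob_le_one
      have hprodnn : (0:ℝ) ≤ ∏ t ∈ Finset.range (m' + 1), (μ (As t)).toReal :=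
        Finset.prod_nonneg fun _ _ => ENNReal.toReal_nonneg
      have hAnn : (0:ℝ) ≤ (μ (As (m' + 1))).toReal := ENNReal.toReal_nonneg
      rw [Finset.prod_range_succ]
      have h3 := mul_le_mul_of_nonneg_right h2 hAnn
      have h4 : ((m':ℝ) + 1) * a d * (μ (As (m' + 1))).toReal ≤ ((m':ℝ) + 1) * a d :=
        mul_le_of_le_one_right (mul_nonneg (by positivity) (ha0 d)) hAle1
      push_cast
      nlinarith [ha0 d]

lemma exists_small (a : ℕ → ℝ) (hmix0 : Filter.Tendsto a Filter.atTop (nhds 0))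
    (ε : ℝ) (hε : 0 < ε) : ∃ d, a d < ε := by
  simpa using (hmix0.eventually_lt_const hε).exists

lemma exists_sel (G : Set ℕ) (hG : G.Infinite) (d : ℕ) :
    ∃ k : ℕ → ℕ, (∀ t, k t ∈ G) ∧ ∀ t, k t + d ≤ k (t + 1) := by
  choose f hf1 hf2 using hG.exists_gt
  refine ⟨fun t => Nat.rec (f 0) (fun _ prev => f (prev + d)) t, fun t => ?_, fun t => ?_⟩
  · cases t <;> simp [hf1]
  · exact le_of_lt (hf2 _)


lemma all_side_zero (μ : Measure (ℕ → ℝ)) [IsProbabilityMeasure μ] (a : ℕ → ℝ)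
    (hmix0 : Filter.Tendsto a Filter.atTop (nhds 0))
    (x : ℕ → ℝ) (b : Bool)
    (hG : {k | (μ ((fun z => z k) ⁻¹' hsSet b (x k))).toReal ≤ 1/2}.Infinite)
    (chain_le : ∀ (d : ℕ) (k : ℕ → ℕ), (∀ t, k t + d ≤ k (t + 1)) →
      ∀ (bs : ℕ → Bool) (c : ℕ → ℝ) (m : ℕ),
      (μ (⋂ t ∈ Finset.range m, (fun z => z (k t)) ⁻¹' hsSet (bs t) (c t))).toReal
        ≤ (∏ t ∈ Finset.range m, (μ ((fun z => z (k t)) ⁻¹' hsSet (bs t) (c t))).toReal)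
          + m * a d) :
    μ {z | ∀ k, z k ∈ hsSet b (x k)} = 0 := by
  have key : ∀ ε : ℝ, 0 < ε → (μ {z | ∀ k, z k ∈ hsSet b (x k)}).toReal ≤ ε := by
    intro ε hε
    obtain ⟨m, hm⟩ : ∃ m : ℕ, (1/2:ℝ)^m < ε/2 :=
      exists_pow_lt_of_lt_one (by linarith) (by norm_num)
    obtain ⟨d, hd⟩ := exists_small a hmix0 (ε/(2*(m+1))) (by positivity)
    obtain ⟨k, hkG, hkgap⟩ := exists_sel _ hG d
    have hsub : {z : ℕ → ℝ | ∀ k, z k ∈ hsSet b (x k)} ⊆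
        ⋂ t ∈ Finset.range m, (fun z => z (k t)) ⁻¹' hsSet b (x (k t)) := by
      intro z hz
      simp only [Set.mem_iInter]
      intro t _
      exact hz (k t)
    have h1 : (μ {z | ∀ k, z k ∈ hsSet b (x k)}).toReal
        ≤ (μ (⋂ t ∈ Finset.range m, (fun z => z (k t)) ⁻¹' hsSet b (x (k t)))).toReal :=
      ENNReal.toReal_mono (measure_ne_top μ _) (measure_mono hsub)
    have h2 := chain_le d k hkgap (fun _ => b) (fun t => x (k t)) m
    have h3 : (∏ t ∈ Finset.range m, (μ ((fun z => z (k t)) ⁻¹' hsSet b (x (k t)))).toReal)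
        ≤ (1/2:ℝ)^m := by
      calc (∏ t ∈ Finset.range m, (μ ((fun z => z (k t)) ⁻¹' hsSet b (x (k t)))).toReal)
          ≤ ∏ _t ∈ Finset.range m, (1/2:ℝ) :=
            Finset.prod_le_prod (fun _ _ => ENNReal.toReal_nonneg) fun t _ => hkG t
        _ = (1/2:ℝ)^m := by rw [Finset.prod_const, Finset.card_range]
    have h4 : (m:ℝ) * a d ≤ ε/2 := by
      have h5 : (m:ℝ) * a d ≤ (m:ℝ) * (ε/(2*(m+1))) :=
        mul_le_mul_of_nonneg_left (le_of_lt hd) (Nat.cast_nonneg m)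
      have h6 : (m:ℝ) * (ε/(2*(m+1))) ≤ ε/2 := by
        rw [mul_div_assoc', div_le_div_iff₀ (by positivity) (by norm_num : (0:ℝ) < 2)]
        nlinarith [Nat.cast_nonneg (α := ℝ) m, hε]
      linarith
    linarith
  have h0 : (μ {z | ∀ k, z k ∈ hsSet b (x k)}).toReal = 0 :=
    le_antisymm (le_of_forall_pos_le_add (by simpa using key)) ENNReal.toReal_nonneg
  rcases (ENNReal.toReal_eq_zero_iff _).mp h0 with h | h
  · exact h
  · exact absurd h (measure_ne_top μ _)

lemma psum (μ : Measure (ℕ → ℝ)) [IsProbabilityMeasure μ]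
    (hna : ∀ (k : ℕ) (c : ℝ), μ {z | z k = c} = 0) (k : ℕ) (c : ℝ) :
    (μ ((fun z : ℕ → ℝ => z k) ⁻¹' hsSet true c)).toReal
      + (μ ((fun z : ℕ → ℝ => z k) ⁻¹' hsSet false c)).toReal = 1 := by
  have hmeas : MeasurableSet ((fun z : ℕ → ℝ => z k) ⁻¹' hsSet false c) :=
    (measurable_pi_apply k) (by simp [hsSet] : MeasurableSet (hsSet false c))
  have hU : ((fun z : ℕ → ℝ => z k) ⁻¹' hsSet true c)
      ∪ ((fun z : ℕ → ℝ => z k) ⁻¹' hsSet false c) = Set.univ := by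
    ext z; simp [hsSet, le_total]
  have hI : ((fun z : ℕ → ℝ => z k) ⁻¹' hsSet true c)
      ∩ ((fun z : ℕ → ℝ => z k) ⁻¹' hsSet false c) = {z | z k = c} := by
    ext z; simp only [hsSet, if_true, if_false, Bool.false_eq_true, Set.mem_inter_iff,
      Set.mem_preimage, Set.mem_Iic, Set.mem_Ici, Set.mem_setOf_eq]
    constructor
    · rintro ⟨h1, h2⟩; exact le_antisymm h1 h2
    · rintro rfl; exact ⟨le_refl _, le_refl _⟩
  have := measure_union_add_inter (μ := μ) ((fun z : ℕ → ℝ => z k) ⁻¹' hsSet true c) hmeas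
  rw [hU, hI, hna k c, add_zero, measure_univ] at this
  rw [← ENNReal.toReal_add (measure_ne_top μ _) (measure_ne_top μ _), ← this, ENNReal.toReal_one]

lemma hrd_zero (μ : Measure (ℕ → ℝ)) [IsProbabilityMeasure μ]
    (hna : ∀ (k : ℕ) (c : ℝ), μ {z | z k = c} = 0) (a : ℕ → ℝ)
    (hmix0 : Filter.Tendsto a Filter.atTop (nhds 0))
    (x : ℕ → ℝ)
    (chain_le : ∀ (d : ℕ) (k : ℕ → ℕ), (∀ t, k t + d ≤ k (t + 1)) →
      ∀ (bs : ℕ → Bool) (c : ℕ → ℝ) (m : ℕ),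
      (μ (⋂ t ∈ Finset.range m, (fun z => z (k t)) ⁻¹' hsSet (bs t) (c t))).toReal
        ≤ (∏ t ∈ Finset.range m, (μ ((fun z => z (k t)) ⁻¹' hsSet (bs t) (c t))).toReal)
          + m * a d) :
    min (μ {z | ∀ k : ℕ, z k ≤ x k}) (μ {z | ∀ k : ℕ, x k ≤ z k}) = 0 := by
  have hunion : {k | (μ ((fun z => z k) ⁻¹' hsSet true (x k))).toReal ≤ 1/2}
      ∪ {k | (μ ((fun z => z k) ⁻¹' hsSet false (x k))).toReal ≤ 1/2} = Set.univ := by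
    ext k
    simp only [Set.mem_union, Set.mem_setOf_eq, Set.mem_univ, iff_true]
    by_contra h
    push_neg at h
    have := psum μ hna k (x k)
    linarith [h.1, h.2]
  have hinf : {k | (μ ((fun z => z k) ⁻¹' hsSet true (x k))).toReal ≤ 1/2}.Infinite
      ∨ {k | (μ ((fun z => z k) ⁻¹' hsSet false (x k))).toReal ≤ 1/2}.Infinite := by
    by_contra h
    push_neg at h
    have := Set.infinite_univ (α := ℕ)
    rw [← hunion] at this
    exact this (h.1.union h.2)
  rcases hinf with h | h
  · have h0 : μ {z | ∀ k : ℕ, z k ≤ x k} = 0 := by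
      have := all_side_zero μ a hmix0 x true h chain_le
      simpa [hsSet] using this
    rw [h0]
    exact min_eq_left zero_le
  · have h0 : μ {z | ∀ k : ℕ, x k ≤ z k} = 0 := by
      have := all_side_zero μ a hmix0 x false h chain_le
      simpa [hsSet] using this
    rw [h0]
    exact min_eq_right zero_le

lemma prod_le_prod_add {ι : Type*} (s : Finset ι) (u c : ι → ℝ) (E : ℝ) (hE : 0 ≤ E)
    (hu0 : ∀ i ∈ s, 0 ≤ u i) (hu1 : ∀ i ∈ s, u i ≤ 1)
    (hc0 : ∀ i ∈ s, 0 ≤ c i) (hc1 : ∀ i ∈ s, c i ≤ 1)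
    (h : ∀ i ∈ s, u i ≤ c i + E) :
    ∏ i ∈ s, u i ≤ (∏ i ∈ s, c i) + s.card * E := by
  classical
  induction s using Finset.induction_on with
  | empty => simp
  | insert _ _ hnotmem ih =>
    rename_i i s
    simp only [Finset.prod_insert hnotmem, Finset.card_insert_of_notMem hnotmem]
    have hmem : ∀ j ∈ s, j ∈ insert i s := fun j hj => Finset.mem_insert_of_mem hj
    have ihs := ih (fun j hj => hu0 j (hmem j hj)) (fun j hj => hu1 j (hmem j hj))
      (fun j hj => hc0 j (hmem j hj)) (fun j hj => hc1 j (hmem j hj))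
      (fun j hj => h j (hmem j hj))
    have hii := Finset.mem_insert_self i s
    have hpc0 : (0:ℝ) ≤ ∏ j ∈ s, c j := Finset.prod_nonneg fun j hj => hc0 j (hmem j hj)
    have hpc1 : (∏ j ∈ s, c j) ≤ 1 := Finset.prod_le_one
      (fun j hj => hc0 j (hmem j hj)) (fun j hj => hc1 j (hmem j hj))
    have hpu0 : (0:ℝ) ≤ ∏ j ∈ s, u j := Finset.prod_nonneg fun j hj => hu0 j (hmem j hj)
    have h1 : u i * ∏ j ∈ s, u j ≤ u i * ((∏ j ∈ s, c j) + s.card * E) :=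
      mul_le_mul_of_nonneg_left ihs (hu0 i hii)
    have h2 : u i * ((∏ j ∈ s, c j) + s.card * E)
        ≤ (c i + E) * (∏ j ∈ s, c j) + s.card * E := by
      have := hu1 i hii
      have := hu0 i hii
      have := h i hii
      have hcard : (0:ℝ) ≤ (s.card : ℝ) * E := by positivity
      nlinarith
    have h3 : (c i + E) * (∏ j ∈ s, c j) ≤ c i * (∏ j ∈ s, c j) + E := by
      nlinarith
    push_cast
    linarith

lemma tie_zero (μ : Measure (ℕ → ℝ)) [IsProbabilityMeasure μ]
    (hna : ∀ (k : ℕ) (c : ℝ), μ {z | z k = c} = 0) (J : ℕ) (n : ℕ) (c : ℝ) (i : Fin J) :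
    (Measure.pi fun _ : Fin J => μ) {ω | ω i n = c} = 0 := by
  have hset : {ω : Fin J → ℕ → ℝ | ω i n = c}
      = Set.pi Set.univ (fun i' => if i' = i then {z : ℕ → ℝ | z n = c} else Set.univ) := by
    ext ω
    simp only [Set.mem_setOf_eq, Set.mem_pi, Set.mem_univ, forall_true_left]
    constructor
    · intro h i'
      by_cases hi : i' = i
      · subst hi; simp [h]
      · simp [hi]
    · intro h
      have := h i
      simpa using this
  rw [hset, Measure.pi_pi]
  exact Finset.prod_eq_zero (Finset.mem_univ i) (by simp [hna n c])

lemma band_zero (μ : Measure (ℕ → ℝ)) [IsProbabilityMeasure μ]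
    (hna : ∀ (k : ℕ) (c : ℝ), μ {z | z k = c} = 0)
    (a : ℕ → ℝ) (ha0 : ∀ k, 0 ≤ a k)
    (hmix0 : Filter.Tendsto a Filter.atTop (nhds 0))
    (J j : ℕ) (hJ : 1 ≤ J) (x : ℕ → ℝ)
    (chain_le : ∀ (d : ℕ) (k : ℕ → ℕ), (∀ t, k t + d ≤ k (t + 1)) →
      ∀ (bs : ℕ → Bool) (c : ℕ → ℝ) (m : ℕ),
      (μ (⋂ t ∈ Finset.range m, (fun z => z (k t)) ⁻¹' hsSet (bs t) (c t))).toReal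
        ≤ (∏ t ∈ Finset.range m, (μ ((fun z => z (k t)) ⁻¹' hsSet (bs t) (c t))).toReal)
          + m * a d) :
    (Measure.pi fun _ : Fin J => μ)
      {ω | ∀ k : ℕ, (∃ i : Fin J, (i : ℕ) < j ∧ ω i k ≤ x k) ∧
                    (∃ i : Fin J, (i : ℕ) < j ∧ x k ≤ ω i k)} = 0 := by
  classical
  set ν := (Measure.pi fun _ : Fin J => μ) with hν
  set E := {ω : Fin J → ℕ → ℝ | ∀ k : ℕ, (∃ i : Fin J, (i : ℕ) < j ∧ ω i k ≤ x k) ∧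
                    (∃ i : Fin J, (i : ℕ) < j ∧ x k ≤ ω i k)} with hE
  -- probability shorthands
  set pB : ℕ → Bool → ℝ := fun κ b => (μ ((fun z : ℕ → ℝ => z κ) ⁻¹' hsSet b (x κ))).toReal
    with hpB
  have pB0 : ∀ κ b, 0 ≤ pB κ b := fun κ b => ENNReal.toReal_nonneg
  have pB1 : ∀ κ b, pB κ b ≤ 1 := by
    intro κ b
    rw [hpB, ← ENNReal.toReal_one]
    exact ENNReal.toReal_mono one_ne_top prob_le_one
  have pBsum : ∀ κ, pB κ true + pB κ false = 1 := fun κ => psum μ hna κ (x κ)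
  set ρ : ℝ := 1 - (1/2)^J with hρ
  have hρ0 : 0 ≤ ρ := by
    have : (1/2:ℝ)^J ≤ 1 := pow_le_one₀ (by norm_num) (by norm_num)
    rw [hρ]; linarith
  have hρ1 : ρ < 1 := by
    have : (0:ℝ) < (1/2)^J := by positivity
    rw [hρ]; linarith
  have key : ∀ ε : ℝ, 0 < ε → (ν E).toReal ≤ ε := by
    intro ε hε
    obtain ⟨m, hm⟩ : ∃ m : ℕ, ρ^m < ε/2 := exists_pow_lt_of_lt_one (by linarith) hρ1
    set CB : ℝ := ((2:ℝ)^J)^m * ((J:ℝ) * m) with hCB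
    have hCB0 : 0 ≤ CB := by positivity
    obtain ⟨d, hd⟩ := exists_small a hmix0 (ε/(2*(CB+1))) (by positivity)
    set k : ℕ → ℕ := fun t => t * d with hk
    have hkgap : ∀ t, k t + d ≤ k (t + 1) := by intro t; simp [hk]; ring_nf; omega
    -- allowed sign vectors
    set W : Finset (Fin J → Bool) := Finset.univ.filter
      (fun w => (∃ i : Fin J, (i : ℕ) < j ∧ w i = true) ∧
                (∃ i : Fin J, (i : ℕ) < j ∧ w i = false)) with hW
    set P : Finset (Fin m → Fin J → Bool) := Fintype.piFinset (fun _ : Fin m => W) with hP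
    -- rectangles
    set σx : (Fin m → Fin J → Bool) → ℕ → Fin J → Bool :=
      fun σ t i => if h : t < m then σ ⟨t, h⟩ i else true with hσx
    set B : (Fin m → Fin J → Bool) → Fin J → Set (ℕ → ℝ) :=
      fun σ i => ⋂ t ∈ Finset.range m, (fun z => z (k t)) ⁻¹' hsSet (σx σ t i) (x (k t)) with hB
    set R : (Fin m → Fin J → Bool) → Set (Fin J → ℕ → ℝ) :=
      fun σ => Set.pi Set.univ (fun i => B σ i) with hR
    set T : Set (Fin J → ℕ → ℝ) :=
      ⋃ (i : Fin J), ⋃ t ∈ Finset.range m, {ω : Fin J → ℕ → ℝ | ω i (k t) = x (k t)} with hT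
    have hTzero : ν T = 0 := by
      refine measure_iUnion_null fun i => ?_
      refine measure_biUnion_null_iff (Finset.range m).countable_toSet |>.mpr fun t _ => ?_
      exact tie_zero μ hna J (k t) (x (k t)) i
    have hcover : E ⊆ T ∪ ⋃ σ ∈ P, R σ := by
      intro ω hω
      by_cases htie : ω ∈ T
      · exact Set.mem_union_left _ htie
      · refine Set.mem_union_right _ ?_
        have hne : ∀ (i : Fin J), ∀ t ∈ Finset.range m, ω i (k t) ≠ x (k t) := by
          intro i t ht h
          exact htie (Set.mem_iUnion.mpr ⟨i, Set.mem_biUnion ht h⟩)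
        set σ : Fin m → Fin J → Bool := fun t i => decide (ω i (k t) ≤ x (k t)) with hσ
        have hσP : σ ∈ P := by
          rw [hP, Fintype.mem_piFinset]
          intro t
          rw [hW, Finset.mem_filter]
          refine ⟨Finset.mem_univ _, ?_, ?_⟩
          · obtain ⟨i, hi, hle⟩ := (hω (k t)).1
            exact ⟨i, hi, decide_eq_true hle⟩
          · obtain ⟨i, hi, hge⟩ := (hω (k t)).2
            refine ⟨i, hi, decide_eq_false ?_⟩
            have := hne i t (Finset.mem_range.mpr t.isLt)
            intro hle
            exact this (le_antisymm hle hge)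
        refine Set.mem_biUnion hσP ?_
        rw [hR]
        intro i _
        rw [hB]
        simp only [Set.mem_iInter]
        intro t ht
        have htm : t < m := Finset.mem_range.mp ht
        have hσxv : σx σ t i = decide (ω i (k t) ≤ x (k t)) := by
          simp only [hσx, hσ, htm, dif_pos]
        rw [hσxv]
        by_cases hle : ω i (k t) ≤ x (k t)
        · simp [hle, hsSet]
        · simp only [hle, decide_eq_false hle, hsSet, if_false, Bool.false_eq_true]
          exact Set.mem_Ici.mpr (le_of_not_ge hle)
    -- measure bound
    have hmeas1 : ν E ≤ ∑ σ ∈ P, ν (R σ) := by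
      calc ν E ≤ ν (T ∪ ⋃ σ ∈ P, R σ) := measure_mono hcover
        _ ≤ ν T + ν (⋃ σ ∈ P, R σ) := measure_union_le _ _
        _ = ν (⋃ σ ∈ P, R σ) := by rw [hTzero, zero_add]
        _ ≤ ∑ σ ∈ P, ν (R σ) := measure_biUnion_finset_le _ _
    have hsum_ne : (∑ σ ∈ P, ν (R σ)) ≠ ⊤ :=
      ENNReal.sum_ne_top.mpr fun σ _ => measure_ne_top ν _
    have hreal1 : (ν E).toReal ≤ ∑ σ ∈ P, (ν (R σ)).toReal := by
      calc (ν E).toReal ≤ (∑ σ ∈ P, ν (R σ)).toReal := ENNReal.toReal_mono hsum_ne hmeas1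
        _ = ∑ σ ∈ P, (ν (R σ)).toReal := ENNReal.toReal_sum fun σ _ => measure_ne_top ν _
    -- value of rectangle measures
    have hRval : ∀ σ, (ν (R σ)).toReal = ∏ i : Fin J, (μ (B σ i)).toReal := by
      intro σ
      simp only [hR, hν]
      rw [Measure.pi_pi, ENNReal.toReal_prod]
    have hchainB : ∀ σ (i : Fin J), (μ (B σ i)).toReal
        ≤ (∏ t ∈ Finset.range m, pB (k t) (σx σ t i)) + m * a d := by
      intro σ i
      exact chain_le d k hkgap (fun t => σx σ t i) (fun t => x (k t)) m
    have hBle1 : ∀ σ (i : Fin J), (μ (B σ i)).toReal ≤ 1 := by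
      intro σ i
      rw [← ENNReal.toReal_one]
      exact ENNReal.toReal_mono one_ne_top prob_le_one
    have hc0 : ∀ σ (i : Fin J), (0:ℝ) ≤ ∏ t ∈ Finset.range m, pB (k t) (σx σ t i) :=
      fun σ i => Finset.prod_nonneg fun t _ => pB0 _ _
    have hc1 : ∀ σ (i : Fin J), (∏ t ∈ Finset.range m, pB (k t) (σx σ t i)) ≤ 1 :=
      fun σ i => Finset.prod_le_one (fun t _ => pB0 _ _) (fun t _ => pB1 _ _)
    have hRσ : ∀ σ, (ν (R σ)).toReal
        ≤ (∏ i : Fin J, ∏ t ∈ Finset.range m, pB (k t) (σx σ t i)) + J * (m * a d) := by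
      intro σ
      rw [hRval σ]
      have := prod_le_prod_add (Finset.univ : Finset (Fin J))
        (fun i => (μ (B σ i)).toReal)
        (fun i => ∏ t ∈ Finset.range m, pB (k t) (σx σ t i))
        (m * a d) (mul_nonneg (Nat.cast_nonneg m) (ha0 d))
        (fun i _ => ENNReal.toReal_nonneg) (fun i _ => hBle1 σ i)
        (fun i _ => hc0 σ i) (fun i _ => hc1 σ i) (fun i _ => hchainB σ i)
      simpa [Finset.card_univ, mul_assoc] using this
    -- rewrite the main term via Fin m products
    set g : Fin m → (Fin J → Bool) → ℝ := fun t w => ∏ i : Fin J, pB (k ↑t) (w i) with hg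
    have hmain : ∀ σ : Fin m → Fin J → Bool,
        (∏ i : Fin J, ∏ t ∈ Finset.range m, pB (k t) (σx σ t i))
          = ∏ t : Fin m, g t (σ t) := by
      intro σ
      rw [Finset.prod_comm]
      rw [← Fin.prod_univ_eq_prod_range (fun t => ∏ i : Fin J, pB (k t) (σx σ t i)) m]
      refine Finset.prod_congr rfl fun t _ => ?_
      refine Finset.prod_congr rfl fun i _ => ?_
      congr 1
      simp only [hσx, t.isLt, dif_pos, Fin.eta]
    -- per-coordinate sum bound
    have hg0 : ∀ (t : Fin m) (w : Fin J → Bool), 0 ≤ g t w :=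
      fun t w => Finset.prod_nonneg fun i _ => pB0 _ _
    have hgsum : ∀ t : Fin m, (∑ w ∈ W, g t w) ≤ ρ := by
      intro t
      have htotal : (∑ w : Fin J → Bool, g t w) = 1 := by
        have h1 := Finset.prod_univ_sum (fun _ : Fin J => (Finset.univ : Finset Bool))
          (fun _ b => pB (k ↑t) b)
        rw [Fintype.piFinset_univ] at h1
        have h2 : (∏ _i : Fin J, ∑ b : Bool, pB (k ↑t) b) = 1 := by
          have : (∑ b : Bool, pB (k ↑t) b) = 1 := by
            rw [Fintype.sum_bool]
            linarith [pBsum (k ↑t)]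
          rw [this, Finset.prod_const, one_pow]
        rw [h2] at h1
        rw [hg]
        exact h1.symm
      have hsplit := Finset.sum_filter_add_sum_filter_not Finset.univ
        (fun w => (∃ i : Fin J, (i : ℕ) < j ∧ w i = true) ∧
                  (∃ i : Fin J, (i : ℕ) < j ∧ w i = false)) (g t)
      rw [htotal] at hsplit
      -- bound the complement sum from below
      set wT : Fin J → Bool := fun _ => true with hwT
      set wF : Fin J → Bool := fun _ => false with hwF
      have hTne : wT ≠ wF := by
        intro h
        have := congrFun h ⟨0, by omega⟩
        simp [hwT, hwF] at this
      have hTmem : wT ∈ Finset.univ.filter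
          (fun w => ¬((∃ i : Fin J, (i : ℕ) < j ∧ w i = true) ∧
                  (∃ i : Fin J, (i : ℕ) < j ∧ w i = false))) := by
        simp [hwT]
      have hFmem : wF ∈ Finset.univ.filter
          (fun w => ¬((∃ i : Fin J, (i : ℕ) < j ∧ w i = true) ∧
                  (∃ i : Fin J, (i : ℕ) < j ∧ w i = false))) := by
        simp [hwF]
      have hpair : ({wT, wF} : Finset (Fin J → Bool)) ⊆ Finset.univ.filter
          (fun w => ¬((∃ i : Fin J, (i : ℕ) < j ∧ w i = true) ∧
                  (∃ i : Fin J, (i : ℕ) < j ∧ w i = false))) := by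
        intro w hw
        rcases Finset.mem_insert.mp hw with rfl | hw
        · exact hTmem
        · rw [Finset.mem_singleton.mp hw]; exact hFmem
      have hlow : g t wT + g t wF ≤ ∑ w ∈ Finset.univ.filter
          (fun w => ¬((∃ i : Fin J, (i : ℕ) < j ∧ w i = true) ∧
                  (∃ i : Fin J, (i : ℕ) < j ∧ w i = false))), g t w := by
        rw [← Finset.sum_pair hTne]
        exact Finset.sum_le_sum_of_subset_of_nonneg hpair fun w _ _ => hg0 t w
      have hval : g t wT + g t wF = pB (k ↑t) true ^ J + pB (k ↑t) false ^ J := by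
        simp [hg, hwT, hwF, Finset.prod_const, Finset.card_univ]
      have hhalf : (1/2:ℝ)^J ≤ pB (k ↑t) true ^ J + pB (k ↑t) false ^ J := by
        rcases le_total (1/2 : ℝ) (pB (k ↑t) true) with h | h
        · have h1 : (1/2:ℝ)^J ≤ pB (k ↑t) true ^ J := pow_le_pow_left₀ (by norm_num) h J
          have h2 : (0:ℝ) ≤ pB (k ↑t) false ^ J := pow_nonneg (pB0 _ _) J
          linarith
        · have hf : (1/2:ℝ) ≤ pB (k ↑t) false := by linarith [pBsum (k ↑t)]
          have h1 : (1/2:ℝ)^J ≤ pB (k ↑t) false ^ J := pow_le_pow_left₀ (by norm_num) hf J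
          have h2 : (0:ℝ) ≤ pB (k ↑t) true ^ J := pow_nonneg (pB0 _ _) J
          linarith
      rw [hρ]
      have : (∑ w ∈ W, g t w) = 1 - ∑ w ∈ Finset.univ.filter
          (fun w => ¬((∃ i : Fin J, (i : ℕ) < j ∧ w i = true) ∧
                  (∃ i : Fin J, (i : ℕ) < j ∧ w i = false))), g t w := by
        rw [hW]; linarith [hsplit]
      rw [this]
      linarith
    have hg0s : ∀ t : Fin m, 0 ≤ ∑ w ∈ W, g t w :=
      fun t => Finset.sum_nonneg fun w _ => hg0 t w
    -- assemble
    have hsumP : (∑ σ ∈ P, ∏ t : Fin m, g t (σ t)) ≤ ρ^m := by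
      rw [hP, ← Finset.prod_univ_sum (fun _ : Fin m => W) g]
      calc (∏ t : Fin m, ∑ w ∈ W, g t w) ≤ ∏ _t : Fin m, ρ :=
            Finset.prod_le_prod (fun t _ => hg0s t) (fun t _ => hgsum t)
        _ = ρ^m := by rw [Finset.prod_const, Finset.card_univ, Fintype.card_fin]
    have hcardP : ((P.card : ℝ)) ≤ ((2:ℝ)^J)^m := by
      have h1 : P.card = W.card ^ m := by
        rw [hP, Fintype.card_piFinset]
        rw [Finset.prod_const, Finset.card_univ, Fintype.card_fin]
      have h2 : W.card ≤ 2 ^ J := by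
        calc W.card ≤ (Finset.univ : Finset (Fin J → Bool)).card := Finset.card_filter_le _ _
          _ = 2 ^ J := by rw [Finset.card_univ, Fintype.card_fun, Fintype.card_bool,
                Fintype.card_fin]
      have : P.card ≤ (2 ^ J) ^ m := by
        rw [h1]; exact Nat.pow_le_pow_left h2 m
      calc ((P.card : ℝ)) ≤ (((2^J)^m : ℕ) : ℝ) := Nat.cast_le.mpr this
        _ = ((2:ℝ)^J)^m := by push_cast; ring
    have herr : (P.card : ℝ) * (J * (m * a d)) ≤ ε/2 := by
      have h1 : (P.card : ℝ) * (J * (m * a d)) ≤ ((2:ℝ)^J)^m * (J * (m * a d)) :=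
        mul_le_mul_of_nonneg_right hcardP (mul_nonneg (Nat.cast_nonneg J) (mul_nonneg (Nat.cast_nonneg m) (ha0 d)))
      have h2 : ((2:ℝ)^J)^m * (J * (m * a d)) = CB * a d := by rw [hCB]; ring
      have h3 : CB * a d ≤ CB * (ε/(2*(CB+1))) :=
        mul_le_mul_of_nonneg_left (le_of_lt hd) hCB0
      have h4 : CB * (ε/(2*(CB+1))) ≤ ε/2 := by
        rw [mul_div_assoc', div_le_div_iff₀ (by positivity) (by norm_num : (0:ℝ) < 2)]
        nlinarith
      linarith
    have hfinal : (ν E).toReal ≤ ρ^m + ε/2 := by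
      calc (ν E).toReal ≤ ∑ σ ∈ P, (ν (R σ)).toReal := hreal1
        _ ≤ ∑ σ ∈ P, ((∏ t : Fin m, g t (σ t)) + J * (m * a d)) := by
            refine Finset.sum_le_sum fun σ _ => ?_
            rw [← hmain σ]
            exact hRσ σ
        _ = (∑ σ ∈ P, ∏ t : Fin m, g t (σ t)) + P.card * (J * (m * a d)) := by
            rw [Finset.sum_add_distrib, Finset.sum_const, nsmul_eq_mul]
        _ ≤ ρ^m + ε/2 := add_le_add hsumP herr
    linarith
  have h0 : (ν E).toReal = 0 :=
    le_antisymm (le_of_forall_pos_le_add (by simpa using key)) ENNReal.toReal_nonneg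
  rcases (ENNReal.toReal_eq_zero_iff _).mp h0 with h | h
  · exact h
  · exact absurd h (measure_ne_top ν _)

end Aux

/-- Theorem 3.1: if `X = (X_1, X_2, …)` is an `α`-mixing random sequence whose mixing
coefficients satisfy `∑ α_k^(1−1/(2p)) < ∞` for some `p ≥ 1` and whose coordinates have
non-atomic distributions, then `BD(x) = 0` and `HRD(x) = 0` for `μ`-a.e. `x`. -/
theorem bandDepthSeq_and_halfRegionDepthSeq_ae_eq_zero
    (J : ℕ) (hJ : 2 ≤ J)
    (μ : Measure (ℕ → ℝ)) [IsProbabilityMeasure μ]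
    -- each coordinate has a non-atomic distribution
    (hna : ∀ (k : ℕ) (c : ℝ), μ {z | z k = c} = 0)
    -- `X` is α-mixing with coefficients `a`, and `∑ a_k^(1-1/(2p)) < ∞` for some `p ≥ 1`
    (a : ℕ → ℝ) (ha0 : ∀ k, 0 ≤ a k)
    (hmix : ∀ n k : ℕ, ∀ A B : Set (ℕ → ℝ),
      MeasurableSet[⨆ i ∈ Finset.Iic n,
        MeasurableSpace.comap (fun z : ℕ → ℝ => z i) (borel ℝ)] A →
      MeasurableSet[⨆ (i : ℕ) (_ : n + k ≤ i),
        MeasurableSpace.comap (fun z : ℕ → ℝ => z i) (borel ℝ)] B →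
      |(μ (A ∩ B)).toReal - (μ A).toReal * (μ B).toReal| ≤ a k)
    (hmix0 : Filter.Tendsto a Filter.atTop (nhds 0))
    (p : ℝ) (hp : 1 ≤ p)
    (hasum : Summable fun k => a k ^ (1 - 1 / (2 * p))) :
    ∀ᵐ x ∂μ, bandDepthSeq μ J x = 0 ∧ halfRegionDepthSeq μ x = 0 := by
  have hchain : ∀ (d : ℕ) (k : ℕ → ℕ), (∀ t, k t + d ≤ k (t + 1)) →
      ∀ (bs : ℕ → Bool) (c : ℕ → ℝ) (m : ℕ),
      (μ (⋂ t ∈ Finset.range m, (fun z => z (k t)) ⁻¹' hsSet (bs t) (c t))).toReal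
        ≤ (∏ t ∈ Finset.range m, (μ ((fun z => z (k t)) ⁻¹' hsSet (bs t) (c t))).toReal)
          + m * a d := by
    intro d k hk bs c m
    exact chain_le μ a ha0 hmix d k hk
      (fun t => (fun z => z (k t)) ⁻¹' hsSet (bs t) (c t))
      (fun t => ⟨hsSet (bs t) (c t), hsSet_borel _ _, rfl⟩) m
  refine Filter.Eventually.of_forall fun x => ⟨?_, ?_⟩
  · unfold bandDepthSeq
    refine Finset.sum_eq_zero fun j hj => ?_
    exact band_zero μ hna a ha0 hmix0 J j (by omega) x hchain
  · unfold halfRegionDepthSeq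
    exact hrd_zero μ hna a hmix0 x hchain
end

section
/- Let {B_t}_{t∈[0,1]} be a standard Brownian motion on [0,1] with continuous sample paths starting at 0, and let f = {f_t}_{t∈[0,1]} ∈ C[0,1] satisfy f_0 = 0 and be such that f changes sign infinitely often in every right neighbourhood of zero, i.e., for every ε > 0 there exist s, t ∈ (0, ε) with f_s < 0 and f_t > 0. Define T = inf{ t > 0 : B_t − f_t > 0 } and S = inf{ t > 0 : B_t − f_t < 0 }. Then P(T = 0) = P(S = 0) = 1. -/
set_option synthInstance.maxHeartbeats 400000
set_option maxHeartbeats 1000000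

open MeasureTheory ProbabilityTheory ENNReal

/-- The unit interval `[0,1]` as a type. -/
abbrev unitI : Type := Set.Icc (0 : ℝ) 1

/-- `B` is a standard Brownian motion on `[0,1]` (with continuous sample paths, realized as a
random element of `C[0,1]`) under the probability measure `P`: it is measurable, starts at `0`,
has Gaussian increments `B_t − B_s ~ N(0, t−s)`, and has independent increments. -/
def IsStdBrownianMotion {Ω : Type*} [MeasurableSpace Ω] [MeasurableSpace C(unitI, ℝ)]
    (P : Measure Ω) (B : Ω → C(unitI, ℝ)) : Prop :=
  Measurable B ∧
  (∀ ω, B ω ⟨0, Set.left_mem_Icc.mpr zero_le_one⟩ = 0) ∧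
  (∀ s t : unitI, (s : ℝ) ≤ (t : ℝ) →
    P.map (fun ω => B ω t - B ω s) = gaussianReal 0 (Real.toNNReal ((t : ℝ) - (s : ℝ)))) ∧
  (∀ (n : ℕ) (t : Fin (n + 1) → unitI), Monotone t →
    iIndepFun
      (fun k : Fin n => fun ω => B ω (t k.succ) - B ω (t k.castSucc)) P)

/-- A centered Gaussian gives mass at least `1/2` to `(c, ∞)` when `c < 0`. -/
lemma gauss_half {v : NNReal} (hv : v ≠ 0) {c : ℝ} (hc : c < 0) :
    1/2 ≤ gaussianReal 0 v (Set.Ioi c) := by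
  set μ := gaussianReal 0 v with hμ
  have hmapneg : μ.map (fun x : ℝ => -x) = μ := by
    have h := gaussianReal_map_const_mul (μ := 0) (v := v) (-1)
    simp only [neg_one_mul] at h
    rw [hμ, h]
    congr 1
    · norm_num
    · ext
      norm_num
  have hsymm : μ (Set.Ici (0:ℝ)) = μ (Set.Iic 0) := by
    conv_lhs => rw [← hmapneg]
    rw [Measure.map_apply measurable_neg measurableSet_Ici]
    congr 1
    ext x
    simp
  have h1 : μ (Set.Iic (0:ℝ)) + μ (Set.Ioi 0) = 1 := by
    have := measure_add_measure_compl (μ := μ) (measurableSet_Iic (a := (0:ℝ)))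
    rwa [Set.compl_Iic, measure_univ] at this
  have h2 : (1:ℝ≥0∞) ≤ μ (Set.Ici (0:ℝ)) * 2 := by
    calc (1:ℝ≥0∞) = μ (Set.Iic 0) + μ (Set.Ioi 0) := h1.symm
    _ ≤ μ (Set.Ici 0) + μ (Set.Ici 0) :=
        add_le_add hsymm.ge (measure_mono Set.Ioi_subset_Ici_self)
    _ = μ (Set.Ici 0) * 2 := by ring
  have h3 : (1:ℝ≥0∞)/2 ≤ μ (Set.Ici 0) :=
    ENNReal.div_le_of_le_mul h2
  exact h3.trans (measure_mono fun x hx => lt_of_lt_of_le hc hx)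

/-- helper: EReal `a ≤ ε` for all positive real `ε` implies `a ≤ 0`. -/
lemma ereal_le_zero_of_forall_le_pos {a : EReal} (h : ∀ ε : ℝ, 0 < ε → a ≤ (ε : EReal)) :
    a ≤ 0 := by
  induction a using EReal.rec with
  | bot => exact bot_le
  | coe x =>
    norm_cast
    by_contra hx
    push_neg at hx
    have hh := h (x/2) (by linarith)
    norm_cast at hh
    linarith
  | top =>
    exact absurd (top_le_iff.mp (h 1 one_pos)) (EReal.coe_ne_top 1)

lemma eval_meas {Ω : Type*} [MeasurableSpace Ω] [MeasurableSpace C(unitI, ℝ)]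
    [BorelSpace C(unitI, ℝ)] {B : Ω → C(unitI, ℝ)} (hB : Measurable B) (u : unitI) :
    Measurable fun ω => B ω u :=
  ((ContinuousEvalConst.continuous_eval_const u).measurable).comp hB

/-- Main auxiliary lemma: if `f` is negative at points arbitrarily close to `0`, then
`B - f` is positive at points arbitrarily close to `0`, almost surely. -/
lemma main_aux {Ω : Type*} [MeasurableSpace Ω] (P : Measure Ω) [IsProbabilityMeasure P]
    [MeasurableSpace C(unitI, ℝ)] [BorelSpace C(unitI, ℝ)]
    (B : Ω → C(unitI, ℝ)) (hBM : IsStdBrownianMotion P B)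
    (f : C(unitI, ℝ))
    (hneg : ∀ ε : ℝ, 0 < ε → ∃ s : unitI, 0 < (s : ℝ) ∧ (s : ℝ) < ε ∧ f s < 0) :
    ∀ᵐ ω ∂P, sInf {x : EReal | ∃ t : unitI, x = ((t : ℝ) : EReal) ∧ 0 < (t : ℝ) ∧
        0 < B ω t - f t} = (0 : EReal) := by
  classical
  obtain ⟨hBmeas, hB0, hlawBM, hindBM⟩ := hBM
  -- construct the sequence s
  obtain ⟨s0, hs00, hs01, hs0f⟩ := hneg 1 one_pos
  have hstep : ∀ (n : ℕ) (x : unitI), 0 < (x : ℝ) →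
      ∃ y : unitI, (0 < (y : ℝ) ∧ f y < 0) ∧ (y : ℝ) < (x : ℝ) ∧ (y : ℝ) < 1/(n+1) := by
    intro n x hx
    obtain ⟨y, hy0, hylt, hyf⟩ := hneg (min (x : ℝ) (1/(n+1))) (lt_min hx (by positivity))
    exact ⟨y, ⟨hy0, hyf⟩, hylt.trans_le (min_le_left _ _), hylt.trans_le (min_le_right _ _)⟩
  choose! nxt hnxt using hstep
  set s : ℕ → unitI := fun n => Nat.rec s0 (fun n prev => nxt n prev) n with hs_def
  have hsucc : ∀ n, s (n+1) = nxt n (s n) := fun n => rfl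
  have hinv : ∀ n, 0 < (s n : ℝ) ∧ f (s n) < 0 := by
    intro n
    induction n with
    | zero => exact ⟨hs00, hs0f⟩
    | succ n ih =>
      rw [hsucc]
      exact (hnxt n (s n) ih.1).1
  have hdec : ∀ n, (s (n+1) : ℝ) < (s n : ℝ) := by
    intro n
    rw [hsucc]
    exact (hnxt n (s n) (hinv n).1).2.1
  have hsmall : ∀ n, (s (n+1) : ℝ) < 1/(n+1) := by
    intro n
    rw [hsucc]
    exact (hnxt n (s n) (hinv n).1).2.2
  have hSA : StrictAnti fun n => (s n : ℝ) := strictAnti_nat_of_succ_lt hdec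
  -- increments
  set Y : ℕ → Ω → ℝ := fun n ω => B ω (s n) - B ω (s (n+1)) with hY_def
  have hYmeas : ∀ n, Measurable (Y n) := fun n => (eval_meas hBmeas _).sub (eval_meas hBmeas _)
  -- independence of the increments
  have hIndY : iIndepFun Y P := by
    rw [iIndepFun_iff_measure_inter_preimage_eq_mul]
    intro S sets hsets
    set N : ℕ := S.sup id + 1 with hN
    have hjN : ∀ j ∈ S, j < N := fun j hj => Nat.lt_succ_of_le (Finset.le_sup (f := id) hj)
    set t : Fin (N+1) → unitI := fun i => s (N - (i : ℕ)) with ht_def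
    have hmono : Monotone t := by
      intro i j hij
      have h1 : N - (j : ℕ) ≤ N - (i : ℕ) := Nat.sub_le_sub_left hij N
      exact Subtype.coe_le_coe.mp (hSA.antitone h1)
    have hInd := hindBM N t hmono
    set φ : ℕ → Fin N := fun j => ⟨N - 1 - j, by omega⟩ with hφ_def
    have hg : ∀ j, j < N → (fun ω => B ω (t (φ j).succ) - B ω (t (φ j).castSucc)) = Y j := by
      intro j hjlt
      have h1 : N - (((φ j) : ℕ) + 1) = j := by simp only [hφ_def]; omega
      have h2 : N - ((φ j) : ℕ) = j + 1 := by simp only [hφ_def]; omega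
      funext ω
      simp only [hY_def, ht_def, Fin.val_succ, Fin.coe_castSucc, h1, h2]
    have hφinj : Set.InjOn φ S := by
      intro a ha b hb hab
      have ha' := hjN a ha
      have hb' := hjN b hb
      have : N - 1 - a = N - 1 - b := congrArg Fin.val hab
      omega
    have key := iIndepFun_iff_measure_inter_preimage_eq_mul.mp hInd (S.image φ)
      (sets := fun k => sets (N - 1 - (k : ℕ)))
      (by
        intro k hk
        obtain ⟨j, hj, rfl⟩ := Finset.mem_image.mp hk
        have hjlt := hjN j hj
        have hval : N - 1 - ((φ j : Fin N) : ℕ) = j := by simp only [hφ_def]; omega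
        show MeasurableSet (sets (N - 1 - ((φ j : Fin N) : ℕ)))
        rw [hval]
        exact hsets j hj)
    rw [Finset.set_biInter_finset_image, Finset.prod_image (fun a ha b hb => hφinj ha hb)] at key
    have hcong : ∀ j ∈ S,
        (fun ω => B ω (t (φ j).succ) - B ω (t (φ j).castSucc)) ⁻¹'
            (sets (N - 1 - ((φ j : Fin N) : ℕ))) = Y j ⁻¹' sets j := by
      intro j hj
      have hjlt := hjN j hj
      have hval : N - 1 - ((φ j : Fin N) : ℕ) = j := by simp only [hφ_def]; omega
      rw [hval, hg j hjlt]
    calc P (⋂ j ∈ S, Y j ⁻¹' sets j)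
        = P (⋂ j ∈ S, (fun ω => B ω (t (φ j).succ) - B ω (t (φ j).castSucc)) ⁻¹'
            (sets (N - 1 - ((φ j : Fin N) : ℕ)))) := by
          congr 1
          exact Set.iInter_congr fun j => Set.iInter_congr fun hj => (hcong j hj).symm
    _ = ∏ j ∈ S, P ((fun ω => B ω (t (φ j).succ) - B ω (t (φ j).castSucc)) ⁻¹'
            (sets (N - 1 - ((φ j : Fin N) : ℕ)))) := key
    _ = ∏ j ∈ S, P (Y j ⁻¹' sets j) := Finset.prod_congr rfl fun j hj => by rw [hcong j hj]
  -- the law of B at time s n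
  have hlaw : ∀ n, P.map (fun ω => B ω (s n)) = gaussianReal 0 (Real.toNNReal (s n : ℝ)) := by
    intro n
    have h := hlawBM ⟨0, Set.left_mem_Icc.mpr zero_le_one⟩ (s n) (by exact (hinv n).1.le)
    have he : (fun ω => B ω (s n) - B ω ⟨0, Set.left_mem_Icc.mpr zero_le_one⟩) =
        fun ω => B ω (s n) := by
      funext ω
      rw [hB0 ω, sub_zero]
    rw [he] at h
    have hc : ((⟨0, Set.left_mem_Icc.mpr zero_le_one⟩ : unitI) : ℝ) = 0 := rfl
    rw [hc, sub_zero] at h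
    exact h
  -- the events
  set A : ℕ → Set Ω := fun n => {ω | f (s n) < B ω (s n)} with hA_def
  have hApre : ∀ n, A n = (fun ω => B ω (s n)) ⁻¹' Set.Ioi (f (s n)) := fun n => rfl
  have hA_half : ∀ n, 1/2 ≤ P (A n) := by
    intro n
    rw [hApre, ← Measure.map_apply (eval_meas hBmeas _) measurableSet_Ioi, hlaw n]
    exact gauss_half (Real.toNNReal_pos.mpr (hinv n).1).ne' (hinv n).2
  set G : ℕ → Set Ω := fun m => ⋃ n, ⋃ (_ : m ≤ n), A n with hG_def
  set E : Set Ω := ⋂ m, G m with hE_def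
  have hGanti : ∀ {a b : ℕ}, a ≤ b → G b ⊆ G a := by
    intro a b hab x hx
    obtain ⟨n, hn, hxn⟩ := Set.mem_iUnion₂.mp hx
    exact Set.mem_iUnion₂.mpr ⟨n, hab.trans hn, hxn⟩
  -- tail measurability
  set Hm : ℕ → MeasurableSpace Ω := fun n => MeasurableSpace.comap (Y n) inferInstance with hHm_def
  have h_le : ∀ n, Hm n ≤ ‹MeasurableSpace Ω› := fun n => measurable_iff_comap_le.mp (hYmeas n)
  have h_indep : iIndep Hm P := hIndY
  have ht_tail : MeasurableSet[Filter.limsup Hm Filter.atTop] E := by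
    rw [Filter.limsup_eq_iInf_iSup_of_nat, MeasurableSpace.measurableSet_iInf]
    intro m
    set M : MeasurableSpace Ω := ⨆ n, ⨆ (_ : n ≥ m), Hm n with hM_def
    have hYM : ∀ k, m ≤ k → Measurable[M] (Y k) := by
      intro k hk
      have h1 : Measurable[Hm k] (Y k) := measurable_iff_comap_le.mpr le_rfl
      exact h1.mono (le_iSup₂ (f := fun n (_ : n ≥ m) => Hm n) k hk) le_rfl
    have hkey : ∀ n, m ≤ n → Measurable[M] fun ω => B ω (s n) := by
      intro n hn
      have hsum : ∀ j : ℕ, Measurable[M] fun ω => B ω (s n) - B ω (s (n + j + 1)) := by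
        intro j
        induction j with
        | zero => exact hYM n hn
        | succ j ih =>
          have hfe : (fun ω => B ω (s n) - B ω (s (n + (j+1) + 1))) =
              fun ω => (B ω (s n) - B ω (s (n + j + 1))) + Y (n + j + 1) ω := by
            funext ω
            have e : n + (j + 1) + 1 = (n + j + 1) + 1 := by omega
            rw [e]
            show _ = _ + (B ω (s (n + j + 1)) - B ω (s ((n + j + 1) + 1)))
            ring
          rw [hfe]
          exact Measurable.add ih (hYM (n + j + 1) (by omega))
      apply measurable_of_tendsto_metrizable'
        (f := fun j ω => B ω (s n) - B ω (s (n + j + 1))) Filter.atTop hsum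
      rw [tendsto_pi_nhds]
      intro ω
      have hst : Filter.Tendsto (fun j : ℕ => s (n + j + 1)) Filter.atTop
          (nhds ⟨0, Set.left_mem_Icc.mpr zero_le_one⟩) := by
        rw [tendsto_subtype_rng]
        show Filter.Tendsto (fun j : ℕ => ((s (n + j + 1) : unitI) : ℝ)) Filter.atTop (nhds 0)
        refine squeeze_zero (f := fun j : ℕ => ((s (n + j + 1) : unitI) : ℝ))
          (g := fun j : ℕ => 1/(j+1)) ?_ ?_ ?_
        · intro j
          show (0:ℝ) ≤ ((s (n + j + 1) : unitI) : ℝ)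
          exact (hinv (n + j + 1)).1.le
        · intro j
          have h1 : (s (n + j + 1) : ℝ) < 1/(↑(n+j)+1) := hsmall (n + j)
          have h2 : (1:ℝ)/(↑(n+j)+1) ≤ 1/(↑j+1) := by
            apply one_div_le_one_div_of_le (by positivity)
            push_cast
            linarith [Nat.cast_nonneg (α := ℝ) n]
          linarith
        · exact tendsto_one_div_add_atTop_nhds_zero_nat
      have h1 : Filter.Tendsto (fun j => B ω (s (n + j + 1))) Filter.atTop (nhds 0) := by
        have := ((B ω).continuous.tendsto _).comp hst
        rwa [hB0 ω] at this
      have h2 := Filter.Tendsto.sub (tendsto_const_nhds (x := B ω (s n))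
        (f := Filter.atTop (α := ℕ))) h1
      simpa using h2
    have hEeq : E = ⋂ j, G (m + j) := by
      apply Set.Subset.antisymm
      · exact Set.subset_iInter fun j => Set.iInter_subset G (m + j)
      · intro x hx
        apply Set.mem_iInter.2
        intro j
        exact hGanti (Nat.le_add_left j m) (Set.mem_iInter.1 hx j)
    rw [hEeq]
    refine MeasurableSet.iInter fun j => MeasurableSet.iUnion fun n =>
      MeasurableSet.iUnion fun hn => ?_
    rw [hApre]
    exact hkey n (by omega) measurableSet_Ioi
  -- Kolmogorov 0-1 law
  have h01 := measure_zero_or_one_of_measurableSet_limsup_atTop h_le h_indep ht_tail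
  have hAmeas : ∀ n, MeasurableSet (A n) := by
    intro n
    rw [hApre]
    exact (eval_meas hBmeas _) measurableSet_Ioi
  have hGmeas : ∀ m, MeasurableSet (G m) :=
    fun m => MeasurableSet.iUnion fun n => MeasurableSet.iUnion fun _ => hAmeas n
  have hEmeas : MeasurableSet E := MeasurableSet.iInter fun m => hGmeas m
  have hhalf : 1/2 ≤ P E := by
    rw [hE_def, Directed.measure_iInter (fun m => (hGmeas m).nullMeasurableSet)
      (fun a b => ⟨max a b, hGanti (le_max_left a b), hGanti (le_max_right a b)⟩)
      ⟨0, measure_ne_top P _⟩]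
    exact le_iInf fun m => le_trans (hA_half m)
      (measure_mono (Set.subset_iUnion₂ (s := fun n (_ : m ≤ n) => A n) m le_rfl))
  have hPE : P E = 1 := by
    rcases h01 with h | h
    · rw [h] at hhalf
      simp at hhalf
    · exact h
  have hae : ∀ᵐ ω ∂P, ω ∈ E := by
    rw [ae_iff]
    have hcompl : {ω | ¬ ω ∈ E} = Eᶜ := rfl
    rw [hcompl, prob_compl_eq_zero_iff hEmeas]
    exact hPE
  filter_upwards [hae] with ω hω
  set X : Set EReal := {x : EReal | ∃ t : unitI, x = ((t : ℝ) : EReal) ∧ 0 < (t : ℝ) ∧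
      0 < B ω t - f t} with hX_def
  apply le_antisymm
  · apply ereal_le_zero_of_forall_le_pos
    intro ε hε
    obtain ⟨j, hj⟩ := exists_nat_one_div_lt hε
    obtain ⟨n, hn, hAn⟩ : ∃ n, j + 1 ≤ n ∧ f (s n) < B ω (s n) := by
      have hx := Set.mem_iInter.1 hω (j + 1)
      obtain ⟨n, hn, hxn⟩ := Set.mem_iUnion₂.mp hx
      exact ⟨n, hn, hxn⟩
    have hsn : (s n : ℝ) < ε := by
      have h1 : (s n : ℝ) ≤ (s (j+1) : ℝ) := hSA.antitone hn
      have h2 : (s (j+1) : ℝ) < 1/(↑j+1) := hsmall j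
      linarith
    have hmem : ((s n : ℝ) : EReal) ∈ X := ⟨s n, rfl, (hinv n).1, sub_pos.2 hAn⟩
    exact le_trans (sInf_le hmem) (by exact_mod_cast hsn.le)
  · apply le_sInf
    rintro x ⟨t, rfl, ht, _⟩
    exact_mod_cast EReal.coe_nonneg.mpr t.2.1

lemma isStdBM_neg {Ω : Type*} [MeasurableSpace Ω] {P : Measure Ω}
    [MeasurableSpace C(unitI, ℝ)] [BorelSpace C(unitI, ℝ)]
    {B : Ω → C(unitI, ℝ)} (hBM : IsStdBrownianMotion P B) :
    IsStdBrownianMotion P (fun ω => -(B ω)) := by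
  obtain ⟨hmeas, hzero, hlaw, hind⟩ := hBM
  refine ⟨continuous_neg.measurable.comp hmeas, fun ω => by rw [ContinuousMap.neg_apply, hzero ω, neg_zero], ?_, ?_⟩
  · intro u v huv
    have he : (fun ω => (-(B ω)) v - (-(B ω)) u) = (fun x : ℝ => -x) ∘ (fun ω => B ω v - B ω u) := by
      funext ω
      simp only [ContinuousMap.neg_apply, Function.comp_apply]
      ring
    rw [he, ← Measure.map_map measurable_neg (show Measurable (fun ω => B ω v - B ω u) from (eval_meas hmeas v).sub (eval_meas hmeas u)),
      hlaw u v huv]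
    have h := gaussianReal_map_const_mul (μ := 0) (v := Real.toNNReal ((v:ℝ) - (u:ℝ))) (-1)
    simp only [neg_one_mul] at h
    rw [h]
    congr 1
    · norm_num
    · ext
      norm_num
  · intro n t ht
    have hcomp := (hind n t ht).comp (fun _ => fun x : ℝ => -x) (fun _ => measurable_neg)
    have he : (fun k : Fin n => fun ω => (-(B ω)) (t k.succ) - (-(B ω)) (t k.castSucc)) =
        fun k : Fin n => (fun x : ℝ => -x) ∘ (fun ω => B ω (t k.succ) - B ω (t k.castSucc)) := by
      funext k ω
      simp only [ContinuousMap.neg_apply, Function.comp_apply]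
      ring
    rw [he]
    exact hcomp

/-- Lemma 6.5 (for Brownian motion): let `B` be a standard Brownian motion on `[0,1]` started
at `0`, and let `f ∈ C[0,1]` with `f(0) = 0` change sign infinitely often in every right
neighbourhood of `0`.  With `T = inf{t > 0 : B_t − f_t > 0}` and `S = inf{t > 0 : B_t − f_t < 0}`
(infima taken in the extended reals, so `inf ∅ = +∞`), we have `P(T = 0) = P(S = 0) = 1`. -/
theorem brownian_crosses_sign_changing_curve_immediately
    {Ω : Type*} [MeasurableSpace Ω] (P : Measure Ω) [IsProbabilityMeasure P]
    [MeasurableSpace C(unitI, ℝ)] [BorelSpace C(unitI, ℝ)]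
    (B : Ω → C(unitI, ℝ)) (hBM : IsStdBrownianMotion P B)
    (f : C(unitI, ℝ)) (hf0 : f ⟨0, Set.left_mem_Icc.mpr zero_le_one⟩ = 0)
    (hsign : ∀ ε : ℝ, 0 < ε → ∃ s t : unitI,
      0 < (s : ℝ) ∧ (s : ℝ) < ε ∧ f s < 0 ∧ 0 < (t : ℝ) ∧ (t : ℝ) < ε ∧ 0 < f t) :
    (∀ᵐ ω ∂P, sInf {x : EReal | ∃ t : unitI, x = ((t : ℝ) : EReal) ∧ 0 < (t : ℝ) ∧
        0 < B ω t - f t} = (0 : EReal)) ∧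
    (∀ᵐ ω ∂P, sInf {x : EReal | ∃ t : unitI, x = ((t : ℝ) : EReal) ∧ 0 < (t : ℝ) ∧
        B ω t - f t < 0} = (0 : EReal)) := by
  constructor
  · apply main_aux P B hBM f
    intro ε hε
    obtain ⟨s, t, h1, h2, h3, _⟩ := hsign ε hε
    exact ⟨s, h1, h2, h3⟩
  · have hBM' := isStdBM_neg hBM
    have hneg : ∀ ε : ℝ, 0 < ε → ∃ s : unitI, 0 < (s : ℝ) ∧ (s : ℝ) < ε ∧ (-f) s < 0 := by
      intro ε hε
      obtain ⟨s, t, _, _, _, h4, h5, h6⟩ := hsign ε hε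
      refine ⟨t, h4, h5, ?_⟩
      simp only [ContinuousMap.neg_apply]
      linarith
    have h := main_aux P (fun ω => -(B ω)) hBM' (-f) hneg
    filter_upwards [h] with ω hω
    have hset : {x : EReal | ∃ t : unitI, x = ((t : ℝ) : EReal) ∧ 0 < (t : ℝ) ∧
        B ω t - f t < 0} = {x : EReal | ∃ t : unitI, x = ((t : ℝ) : EReal) ∧ 0 < (t : ℝ) ∧
        0 < (-(B ω)) t - (-f) t} := by
      ext x
      simp only [Set.mem_setOf_eq, ContinuousMap.neg_apply]
      refine exists_congr fun t => and_congr_right fun _ => and_congr_right fun _ => ?_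
      constructor <;> intro <;> linarith
    rw [hset]
    exact hω
end

section
/- Fix an integer J ≥ 2 and let A_J = J − 2 + 2^{−J+1}. Let {B_t}_{t∈[0,1]} be a standard Brownian motion starting at 0, let y_0 ∈ ℝ, set Y_t = y_0 + B_t, and let X = {X_t}_{t∈[0,1]} = {g(t, Y_t)}_{t∈[0,1]}, where g : [0,1] × ℝ → ℝ is continuous, g(t,·) is strictly increasing for each t ∈ [0,1], and g(t,s) → ∞ as s → ∞ for each t ∈ [0,1]. Let ψ : [0,1] → [0,∞) be continuous and bounded with ψ(p) > 0 for p ∈ (0,1) and ψ(0) = ψ(1) = 0, and define ID using D_t = ψ ∘ F_t, where F_t is the distribution function of X_t. Then, as x varies over C[0,1], the depth functions MBD(x), MHRD(x) and ID(x) computed from the law of X take all values in (0, A_J], (0, 1/2] and ψ((0,1)), respectively. -/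
set_option synthInstance.maxHeartbeats 400000

open MeasureTheory ProbabilityTheory ENNReal

/-- The modified band depth of `x ∈ C[0,1]` with respect to a probability measure `μ` on
`C[0,1]`, with `J` independent copies (realized via the product measure `μ^{⊗J}`):
`MBD(x) = ∑_{j=2}^J E[λ({t : min_{1≤i≤j} X_{i,t} ≤ x_t ≤ max_{1≤i≤j} X_{i,t}})]`. -/
noncomputable def modBandDepth [MeasurableSpace C(unitI, ℝ)]
    (μ : Measure C(unitI, ℝ)) [SigmaFinite μ] (J : ℕ) (x : C(unitI, ℝ)) : ℝ :=
  ∑ j ∈ Finset.Icc 2 J, ∫ ω, (volume {t : unitI |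
      (∃ i : Fin J, (i : ℕ) < j ∧ ω i t ≤ x t) ∧
      (∃ i : Fin J, (i : ℕ) < j ∧ x t ≤ ω i t)}).toReal
    ∂(Measure.pi fun _ : Fin J => μ)

/-- The modified half-region depth of `x ∈ C[0,1]` with respect to a probability measure `μ`
on `C[0,1]`: `MHRD(x) = min{ E[λ({t : X_t ≤ x_t})], E[λ({t : X_t ≥ x_t})] }`. -/
noncomputable def modHalfRegionDepth [MeasurableSpace C(unitI, ℝ)]
    (μ : Measure C(unitI, ℝ)) (x : C(unitI, ℝ)) : ℝ :=
  min (∫ z, (volume {t : unitI | z t ≤ x t}).toReal ∂μ)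
      (∫ z, (volume {t : unitI | x t ≤ z t}).toReal ∂μ)

/-- The integrated data depth of `x ∈ C[0,1]` with respect to a probability measure `μ` on
`C[0,1]`, with univariate depths `D_t = ψ ∘ F_t`: `ID(x) = ∫_0^1 ψ(F_t(x_t)) dt`. -/
noncomputable def intDepth [MeasurableSpace C(unitI, ℝ)]
    (μ : Measure C(unitI, ℝ)) (ψ : ℝ → ℝ) (x : C(unitI, ℝ)) : ℝ :=
  ∫ t : unitI, ψ ((μ {z | z t ≤ x t}).toReal)

section AuxDepth


noncomputable def stdPhi (r : ℝ) : ℝ := ((gaussianReal 0 1) (Set.Iic r)).toReal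

lemma stdPhi_nonneg (r : ℝ) : 0 ≤ stdPhi r := ENNReal.toReal_nonneg

lemma stdPhi_le_one (r : ℝ) : stdPhi r ≤ 1 := by
  have h := prob_le_one (μ := gaussianReal 0 1) (s := Set.Iic r)
  simpa [stdPhi] using ENNReal.toReal_le_of_le_ofReal one_pos.le (by simpa using h)

lemma gauss_Iic (r : ℝ) : gaussianReal 0 1 (Set.Iic r) = ENNReal.ofReal (stdPhi r) :=
  (ENNReal.ofReal_toReal (measure_ne_top _ _)).symm

lemma gauss_singleton (a : ℝ) : gaussianReal 0 1 {a} = 0 :=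
  gaussianReal_absolutelyContinuous 0 one_ne_zero Real.volume_singleton

lemma gauss_Iio (r : ℝ) : gaussianReal 0 1 (Set.Iio r) = ENNReal.ofReal (stdPhi r) := by
  rw [← gauss_Iic]
  refine le_antisymm (measure_mono Set.Iio_subset_Iic_self) ?_
  calc gaussianReal 0 1 (Set.Iic r) = gaussianReal 0 1 (Set.Iio r ∪ {r}) := by
        rw [Set.Iio_union_right]
    _ ≤ gaussianReal 0 1 (Set.Iio r) + gaussianReal 0 1 {r} := measure_union_le _ _
    _ = gaussianReal 0 1 (Set.Iio r) := by rw [gauss_singleton, add_zero]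

lemma gauss_Ici (r : ℝ) : gaussianReal 0 1 (Set.Ici r) = ENNReal.ofReal (1 - stdPhi r) := by
  rw [← Set.compl_Iio, prob_compl_eq_one_sub measurableSet_Iio, gauss_Iio,
    ← ENNReal.ofReal_one, ← ENNReal.ofReal_sub _ (stdPhi_nonneg r)]

lemma gauss_Ioi (r : ℝ) : gaussianReal 0 1 (Set.Ioi r) = ENNReal.ofReal (1 - stdPhi r) := by
  rw [← Set.compl_Iic, prob_compl_eq_one_sub measurableSet_Iic, gauss_Iic,
    ← ENNReal.ofReal_one, ← ENNReal.ofReal_sub _ (stdPhi_nonneg r)]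

lemma stdPhi_eq_integral (r : ℝ) :
    stdPhi r = ∫ x in Set.Iic r, gaussianPDFReal 0 1 x := by
  rw [stdPhi, gaussianReal_apply_eq_integral 0 one_ne_zero,
    ENNReal.toReal_ofReal (setIntegral_nonneg measurableSet_Iic
      (fun x _ => gaussianPDFReal_nonneg 0 1 x))]

lemma stdPhi_continuous : Continuous stdPhi := by
  have h : ∀ r, stdPhi r = (∫ x in Set.Iic (0:ℝ), gaussianPDFReal 0 1 x)
      + ∫ x in (0:ℝ)..r, gaussianPDFReal 0 1 x := by
    intro r
    rw [stdPhi_eq_integral, ← intervalIntegral.integral_Iic_sub_Iic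
      ((integrable_gaussianPDFReal 0 1).integrableOn)
      ((integrable_gaussianPDFReal 0 1).integrableOn)]
    ring
  simp only [funext h]
  exact continuous_const.add ((integrable_gaussianPDFReal 0 1).continuous_primitive 0)

lemma stdPhi_surjOn : ∀ q ∈ Set.Ioo (0:ℝ) 1, ∃ r, stdPhi r = q := by
  intro q hq
  have htop : Filter.Tendsto stdPhi Filter.atTop (nhds 1) := by
    have h1 : Filter.Tendsto (fun r => gaussianReal 0 1 (Set.Iic r)) Filter.atTop
        (nhds (gaussianReal 0 1 Set.univ)) := tendsto_measure_Iic_atTop _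
    rw [measure_univ] at h1
    have := (ENNReal.tendsto_toReal (by norm_num : (1:ℝ≥0∞) ≠ ⊤)).comp h1
    exact this
  obtain ⟨b, hb⟩ := (htop.eventually_const_lt hq.2).exists
  have hbot : Filter.Tendsto (fun n : ℕ => stdPhi (-(n:ℝ))) Filter.atTop (nhds 0) := by
    have h1 : Filter.Tendsto (fun n : ℕ => gaussianReal 0 1 (Set.Iic (-(n:ℝ)))) Filter.atTop
        (nhds (gaussianReal 0 1 (⋂ n : ℕ, Set.Iic (-(n:ℝ))))) := by
      refine tendsto_measure_iInter_atTop (fun n => measurableSet_Iic.nullMeasurableSet)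
        (fun m n hmn => Set.Iic_subset_Iic.mpr (by have : (m:ℝ) ≤ n := Nat.cast_le.mpr hmn; linarith)) ⟨0, measure_ne_top _ _⟩
    have hempty : (⋂ n : ℕ, Set.Iic (-(n:ℝ))) = ∅ := by
      ext x
      simp only [Set.mem_iInter, Set.mem_Iic, Set.mem_empty_iff_false, iff_false, not_forall]
      obtain ⟨n, hn⟩ := exists_nat_gt (-x)
      exact ⟨n, by push_neg; linarith⟩
    rw [hempty, measure_empty] at h1
    have := (ENNReal.tendsto_toReal (by norm_num : (0:ℝ≥0∞) ≠ ⊤)).comp h1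
    simpa [stdPhi, Function.comp_def] using this
  obtain ⟨n, hn⟩ := (hbot.eventually_lt_const hq.1).exists
  have := intermediate_value_univ (-(n:ℝ)) b stdPhi_continuous
  exact this ⟨hn.le, hb.le⟩



lemma unitI_null_zero :
    (volume : Measure unitI) {t : unitI | (t : ℝ) = 0} = 0 := by
  have hsub : {t : unitI | (t : ℝ) = 0} ⊆ {(⟨0, Set.left_mem_Icc.mpr zero_le_one⟩ : unitI)} := by
    intro t ht
    exact Set.mem_singleton_iff.mpr (Subtype.ext ht)
  refine measure_mono_null hsub ?_
  rw [unitInterval.volume_def, Measure.comap_apply _ Subtype.coe_injective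
    (fun s hs => measurableSet_Icc.subtype_image hs) _ (measurableSet_singleton _)]
  simp

lemma unitI_ae_pos : ∀ᵐ t : unitI ∂(volume : Measure unitI), 0 < (t : ℝ) := by
  refine Filter.eventually_of_mem (compl_mem_ae_iff.mpr unitI_null_zero) ?_
  intro t ht
  exact lt_of_le_of_ne t.2.1 (Ne.symm ht)

/-- Fubini helper: if the sections at a.e. time `t` have constant probability `c`,
then the expected occupation time equals `c`. -/
lemma aux_fubini {α : Type*} [MeasurableSpace α] (ρ : Measure α) [IsProbabilityMeasure ρ]
    {S : Set (α × unitI)} (hS : MeasurableSet S) {c : ℝ} (hc : 0 ≤ c)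
    (hae : ∀ᵐ t : unitI ∂(volume : Measure unitI),
      ρ ((fun z => (z, t)) ⁻¹' S) = ENNReal.ofReal c) :
    ∫ z, ((volume : Measure unitI) (Prod.mk z ⁻¹' S)).toReal ∂ρ = c := by
  rw [integral_toReal (measurable_measure_prodMk_left hS).aemeasurable
    (ae_of_all _ fun z => measure_lt_top _ _)]
  have h1 : ∫⁻ z, (volume : Measure unitI) (Prod.mk z ⁻¹' S) ∂ρ = (ρ.prod volume) S :=
    (Measure.prod_apply hS).symm
  rw [h1, Measure.prod_apply_symm hS, lintegral_congr_ae hae, lintegral_const,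
    measure_univ, mul_one, ENNReal.toReal_ofReal hc]

lemma card_filter_lt {J j : ℕ} (hjJ : j ≤ J) :
    (Finset.univ.filter fun i : Fin J => (i : ℕ) < j).card = j := by
  have : (Finset.univ.filter fun i : Fin J => (i : ℕ) < j)
      = Finset.map (Fin.castLEEmb hjJ) Finset.univ := by
    ext i
    simp only [Finset.mem_filter, Finset.mem_univ, true_and]
    constructor
    · intro hi
      exact Finset.mem_map.mpr ⟨⟨(i : ℕ), hi⟩, Finset.mem_univ _, by simp [Fin.ext_iff]⟩
    · intro hi
      obtain ⟨k, -, rfl⟩ := Finset.mem_map.mp hi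
      exact k.2
  rw [this, Finset.card_map, Finset.card_univ, Fintype.card_fin]

lemma pi_forall_lt {J j : ℕ} (hjJ : j ≤ J) [MeasurableSpace C(unitI, ℝ)]
    (μ : Measure C(unitI, ℝ)) [IsProbabilityMeasure μ]
    {A : Set C(unitI, ℝ)} (hA : MeasurableSet A) :
    Measure.pi (fun _ : Fin J => μ) {ω | ∀ i : Fin J, (i : ℕ) < j → ω i ∈ A} = μ A ^ j := by
  have hset : {ω : Fin J → C(unitI, ℝ) | ∀ i : Fin J, (i : ℕ) < j → ω i ∈ A}
      = Set.pi Set.univ (fun i : Fin J => if (i : ℕ) < j then A else Set.univ) := by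
    ext ω
    simp only [Set.mem_setOf_eq, Set.mem_pi, Set.mem_univ, true_implies]
    constructor
    · intro h i
      by_cases hi : (i : ℕ) < j <;> simp [hi, h i]
    · intro h i hi
      have := h i
      rwa [if_pos hi] at this
  rw [hset, Measure.pi_pi]
  have : ∀ i : Fin J, μ (if (i : ℕ) < j then A else Set.univ)
      = if (i : ℕ) < j then μ A else 1 := by
    intro i; split <;> simp
  rw [Finset.prod_congr rfl (fun i _ => this i), Finset.prod_ite, Finset.prod_const,
    Finset.prod_const, one_pow, mul_one, card_filter_lt hjJ]

lemma sum_half_identity : ∀ J : ℕ, 2 ≤ J →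
    ∑ j ∈ Finset.Icc 2 J, ((1:ℝ) - (1 - 1/2)^j - (1/2)^j)
      = (J : ℝ) - 2 + (2:ℝ) ^ ((1 : ℤ) - (J : ℤ)) := by
  intro J hJ
  induction J with
  | zero => omega
  | succ J ih =>
    rcases Nat.lt_or_ge J 2 with hJ2 | hJ2
    · interval_cases J
      · omega
      · norm_num
    · rw [Finset.sum_Icc_succ_top (by omega), ih hJ2]
      have h1 : (2:ℝ) ^ ((1 : ℤ) - (J : ℤ)) = 2 / 2 ^ J := by
        rw [zpow_sub₀ (by norm_num : (2:ℝ) ≠ 0), zpow_one, zpow_natCast]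
      have h2 : (2:ℝ) ^ ((1 : ℤ) - ((J:ℤ) + 1)) = 1 / 2 ^ J := by
        rw [show (1 : ℤ) - ((J:ℤ) + 1) = -(J:ℤ) by ring, zpow_neg, zpow_natCast, one_div]
      push_cast
      rw [h1, h2]
      have h3 : (2:ℝ) ^ J ≠ 0 := by positivity
      field_simp
      rw [show ((2:ℝ) - 1) / 2 = 1 / 2 by norm_num, one_div_pow, pow_succ]
      field_simp
      ring

end AuxDepth

/-- Theorem 3.3(a) (Brownian-motion case): with `X_t = g(t, y₀ + B_t)` for a standard Brownian
motion `B`, `g` continuous, strictly increasing in its second argument with `g(t,s) → ∞` as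
`s → ∞`, and with `ID` built from `D_t = ψ ∘ F_t`, the depths `MBD`, `MHRD` and `ID` take all
values in `(0, A_J]`, `(0, 1/2]` and `ψ((0,1))`, respectively, where `A_J = J − 2 + 2^{1−J}`. -/
theorem depths_take_all_values
    {Ω : Type*} [MeasurableSpace Ω] (P : Measure Ω) [IsProbabilityMeasure P]
    [MeasurableSpace C(unitI, ℝ)] [BorelSpace C(unitI, ℝ)]
    (J : ℕ) (hJ : 2 ≤ J)
    (B : Ω → C(unitI, ℝ)) (hBM : IsStdBrownianMotion P B)
    (y0 : ℝ) (g : unitI → ℝ → ℝ)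
    (hgc : Continuous fun q : unitI × ℝ => g q.1 q.2)
    (hgm : ∀ t : unitI, StrictMono (g t))
    (hglim : ∀ t : unitI, Filter.Tendsto (g t) Filter.atTop Filter.atTop)
    (X : Ω → C(unitI, ℝ)) (hXmeas : Measurable X)
    (hX : ∀ ω t, X ω t = g t (y0 + B ω t))
    (μ : Measure C(unitI, ℝ)) [IsProbabilityMeasure μ] (hμ : μ = P.map X)
    (ψ : ℝ → ℝ) (hψc : ContinuousOn ψ (Set.Icc 0 1))
    (hψnn : ∀ q ∈ Set.Icc (0 : ℝ) 1, 0 ≤ ψ q)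
    (hψpos : ∀ q ∈ Set.Ioo (0 : ℝ) 1, 0 < ψ q)
    (hψ0 : ψ 0 = 0) (hψ1 : ψ 1 = 0) :
    (∀ v ∈ Set.Ioc (0 : ℝ) ((J : ℝ) - 2 + (2 : ℝ) ^ ((1 : ℤ) - (J : ℤ))),
      ∃ x : C(unitI, ℝ), modBandDepth μ J x = v) ∧
    (∀ v ∈ Set.Ioc (0 : ℝ) (1 / 2 : ℝ), ∃ x : C(unitI, ℝ), modHalfRegionDepth μ x = v) ∧
    (∀ v ∈ ψ '' Set.Ioo (0 : ℝ) 1, ∃ x : C(unitI, ℝ), intDepth μ ψ x = v) := by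
  obtain ⟨hBmeas, hB0, hBinc, -⟩ := hBM
  have hevalm : ∀ t : unitI, Measurable fun z : C(unitI, ℝ) => z t :=
    fun t => (continuous_eval_const t).measurable
  -- the law of B at time t
  have hBt : ∀ t : unitI, P.map (fun ω => B ω t) = gaussianReal 0 (Real.toNNReal (t : ℝ)) := by
    intro t
    have h := hBinc ⟨0, Set.left_mem_Icc.mpr zero_le_one⟩ t t.2.1
    have heq : (fun ω => B ω t - B ω ⟨0, Set.left_mem_Icc.mpr zero_le_one⟩)
        = fun ω => B ω t := funext fun ω => by rw [hB0 ω, sub_zero]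
    rw [heq] at h
    simpa using h
  -- scaling: the law of B t is the image of the standard gaussian
  have hBt' : ∀ t : unitI, 0 < (t : ℝ) →
      P.map (fun ω => B ω t) = (gaussianReal 0 1).map (fun y => Real.sqrt (t : ℝ) * y) := by
    intro t ht
    rw [hBt t, gaussianReal_map_const_mul]
    congr 1
    · simp
    · ext
      simp [Real.sq_sqrt ht.le, Real.coe_toNNReal _ ht.le]
  have hPmem : ∀ (t : unitI), 0 < (t : ℝ) → ∀ {s : Set ℝ}, MeasurableSet s →
      P {ω | B ω t ∈ s} = gaussianReal 0 1 ((fun y => Real.sqrt (t : ℝ) * y) ⁻¹' s) := by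
    intro t ht s hs
    have hm : Measurable fun ω : Ω => B ω t := (hevalm t).comp hBmeas
    have h1 : P {ω | B ω t ∈ s} = P.map (fun ω => B ω t) s := by
      rw [Measure.map_apply hm hs]; rfl
    rw [h1, hBt' t ht, Measure.map_apply (measurable_const_mul _) hs]
  -- the four basic probabilities
  have hPle : ∀ (t : unitI), 0 < (t : ℝ) → ∀ r : ℝ,
      P {ω | B ω t ≤ r * Real.sqrt (t : ℝ)} = ENNReal.ofReal (stdPhi r) := by
    intro t ht r
    have hst : 0 < Real.sqrt (t : ℝ) := Real.sqrt_pos.mpr ht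
    have : {ω | B ω t ≤ r * Real.sqrt (t : ℝ)} = {ω | B ω t ∈ Set.Iic (r * Real.sqrt (t:ℝ))} := rfl
    rw [this, hPmem t ht measurableSet_Iic]
    have hpre : (fun y => Real.sqrt (t : ℝ) * y) ⁻¹' Set.Iic (r * Real.sqrt (t:ℝ))
        = Set.Iic r := by
      ext y
      simp only [Set.mem_preimage, Set.mem_Iic]
      rw [mul_comm r, mul_le_mul_iff_right₀ hst]
    rw [hpre, gauss_Iic]
  have hPlt : ∀ (t : unitI), 0 < (t : ℝ) → ∀ r : ℝ,
      P {ω | B ω t < r * Real.sqrt (t : ℝ)} = ENNReal.ofReal (stdPhi r) := by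
    intro t ht r
    have hst : 0 < Real.sqrt (t : ℝ) := Real.sqrt_pos.mpr ht
    have : {ω | B ω t < r * Real.sqrt (t : ℝ)} = {ω | B ω t ∈ Set.Iio (r * Real.sqrt (t:ℝ))} := rfl
    rw [this, hPmem t ht measurableSet_Iio]
    have hpre : (fun y => Real.sqrt (t : ℝ) * y) ⁻¹' Set.Iio (r * Real.sqrt (t:ℝ))
        = Set.Iio r := by
      ext y
      simp only [Set.mem_preimage, Set.mem_Iio]
      rw [mul_comm r, mul_lt_mul_iff_right₀ hst]
    rw [hpre, gauss_Iio]
  have hPge : ∀ (t : unitI), 0 < (t : ℝ) → ∀ r : ℝ,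
      P {ω | r * Real.sqrt (t : ℝ) ≤ B ω t} = ENNReal.ofReal (1 - stdPhi r) := by
    intro t ht r
    have hst : 0 < Real.sqrt (t : ℝ) := Real.sqrt_pos.mpr ht
    have : {ω | r * Real.sqrt (t : ℝ) ≤ B ω t} = {ω | B ω t ∈ Set.Ici (r * Real.sqrt (t:ℝ))} := rfl
    rw [this, hPmem t ht measurableSet_Ici]
    have hpre : (fun y => Real.sqrt (t : ℝ) * y) ⁻¹' Set.Ici (r * Real.sqrt (t:ℝ))
        = Set.Ici r := by
      ext y
      simp only [Set.mem_preimage, Set.mem_Ici]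
      rw [mul_comm r, mul_le_mul_iff_right₀ hst]
    rw [hpre, gauss_Ici]
  have hPgt : ∀ (t : unitI), 0 < (t : ℝ) → ∀ r : ℝ,
      P {ω | r * Real.sqrt (t : ℝ) < B ω t} = ENNReal.ofReal (1 - stdPhi r) := by
    intro t ht r
    have hst : 0 < Real.sqrt (t : ℝ) := Real.sqrt_pos.mpr ht
    have : {ω | r * Real.sqrt (t : ℝ) < B ω t} = {ω | B ω t ∈ Set.Ioi (r * Real.sqrt (t:ℝ))} := rfl
    rw [this, hPmem t ht measurableSet_Ioi]
    have hpre : (fun y => Real.sqrt (t : ℝ) * y) ⁻¹' Set.Ioi (r * Real.sqrt (t:ℝ))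
        = Set.Ioi r := by
      ext y
      simp only [Set.mem_preimage, Set.mem_Ioi]
      rw [mul_comm r, mul_lt_mul_iff_right₀ hst]
    rw [hpre, gauss_Ioi]
  -- the test functions
  set xr : ℝ → C(unitI, ℝ) := fun r => ⟨fun t => g t (y0 + r * Real.sqrt (t : ℝ)),
    hgc.comp (continuous_id.prodMk (continuous_const.add
      (continuous_const.mul (Real.continuous_sqrt.comp continuous_subtype_val))))⟩ with hxr
  have hxr_apply : ∀ r t, xr r t = g t (y0 + r * Real.sqrt (t : ℝ)) := fun r t => rfl
  -- μ-probabilities of the four basic comparison events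
  have hmu_le : ∀ (r : ℝ) (t : unitI), 0 < (t : ℝ) →
      μ {z : C(unitI, ℝ) | z t ≤ xr r t} = ENNReal.ofReal (stdPhi r) := by
    intro r t ht
    have hset : MeasurableSet {z : C(unitI, ℝ) | z t ≤ xr r t} :=
      (hevalm t) measurableSet_Iic
    rw [hμ, Measure.map_apply hXmeas hset]
    have : X ⁻¹' {z : C(unitI, ℝ) | z t ≤ xr r t}
        = {ω | B ω t ≤ r * Real.sqrt (t : ℝ)} := by
      ext ω
      simp only [Set.mem_preimage, Set.mem_setOf_eq, hX, hxr_apply]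
      rw [(hgm t).le_iff_le, add_le_add_iff_left]
    rw [this, hPle t ht r]
  have hmu_lt : ∀ (r : ℝ) (t : unitI), 0 < (t : ℝ) →
      μ {z : C(unitI, ℝ) | z t < xr r t} = ENNReal.ofReal (stdPhi r) := by
    intro r t ht
    have hset : MeasurableSet {z : C(unitI, ℝ) | z t < xr r t} :=
      (hevalm t) measurableSet_Iio
    rw [hμ, Measure.map_apply hXmeas hset]
    have : X ⁻¹' {z : C(unitI, ℝ) | z t < xr r t}
        = {ω | B ω t < r * Real.sqrt (t : ℝ)} := by
      ext ω
      simp only [Set.mem_preimage, Set.mem_setOf_eq, hX, hxr_apply]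
      rw [(hgm t).lt_iff_lt, add_lt_add_iff_left]
    rw [this, hPlt t ht r]
  have hmu_ge : ∀ (r : ℝ) (t : unitI), 0 < (t : ℝ) →
      μ {z : C(unitI, ℝ) | xr r t ≤ z t} = ENNReal.ofReal (1 - stdPhi r) := by
    intro r t ht
    have hset : MeasurableSet {z : C(unitI, ℝ) | xr r t ≤ z t} :=
      (hevalm t) measurableSet_Ici
    rw [hμ, Measure.map_apply hXmeas hset]
    have : X ⁻¹' {z : C(unitI, ℝ) | xr r t ≤ z t}
        = {ω | r * Real.sqrt (t : ℝ) ≤ B ω t} := by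
      ext ω
      simp only [Set.mem_preimage, Set.mem_setOf_eq, hX, hxr_apply]
      rw [(hgm t).le_iff_le, add_le_add_iff_left]
    rw [this, hPge t ht r]
  have hmu_gt : ∀ (r : ℝ) (t : unitI), 0 < (t : ℝ) →
      μ {z : C(unitI, ℝ) | xr r t < z t} = ENNReal.ofReal (1 - stdPhi r) := by
    intro r t ht
    have hset : MeasurableSet {z : C(unitI, ℝ) | xr r t < z t} :=
      (hevalm t) measurableSet_Ioi
    rw [hμ, Measure.map_apply hXmeas hset]
    have : X ⁻¹' {z : C(unitI, ℝ) | xr r t < z t}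
        = {ω | r * Real.sqrt (t : ℝ) < B ω t} := by
      ext ω
      simp only [Set.mem_preimage, Set.mem_setOf_eq, hX, hxr_apply]
      rw [(hgm t).lt_iff_lt, add_lt_add_iff_left]
    rw [this, hPgt t ht r]
  -- integrated depth of xr r
  have hID : ∀ r : ℝ, intDepth μ ψ (xr r) = ψ (stdPhi r) := by
    intro r
    have hae : (fun t : unitI => ψ ((μ {z : C(unitI, ℝ) | z t ≤ xr r t}).toReal))
        =ᵐ[(volume : Measure unitI)] fun _ => ψ (stdPhi r) := by
      filter_upwards [unitI_ae_pos] with t ht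
      rw [hmu_le r t ht, ENNReal.toReal_ofReal (stdPhi_nonneg r)]
    rw [intDepth, integral_congr_ae hae, integral_const, probReal_univ,
      one_smul]
  -- modified half-region depth of xr r
  have hMHRD : ∀ r : ℝ, modHalfRegionDepth μ (xr r) = min (stdPhi r) (1 - stdPhi r) := by
    intro r
    have hS1 : MeasurableSet {p : C(unitI, ℝ) × unitI | p.1 p.2 ≤ xr r p.2} :=
      (isClosed_le continuous_eval
        ((xr r).continuous.comp continuous_snd)).measurableSet
    have hS2 : MeasurableSet {p : C(unitI, ℝ) × unitI | xr r p.2 ≤ p.1 p.2} :=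
      (isClosed_le ((xr r).continuous.comp continuous_snd)
        continuous_eval).measurableSet
    have h1 : ∫ z, ((volume : Measure unitI) {t : unitI | z t ≤ xr r t}).toReal ∂μ
        = stdPhi r := by
      exact aux_fubini μ hS1 (stdPhi_nonneg r)
        (by filter_upwards [unitI_ae_pos] with t ht; exact hmu_le r t ht)
    have h2 : ∫ z, ((volume : Measure unitI) {t : unitI | xr r t ≤ z t}).toReal ∂μ
        = 1 - stdPhi r := by
      exact aux_fubini μ hS2 (by linarith [stdPhi_le_one r])
        (by filter_upwards [unitI_ae_pos] with t ht; exact hmu_ge r t ht)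
    rw [modHalfRegionDepth, h1, h2]
  -- modified band depth of xr r
  have hMBD : ∀ r : ℝ, modBandDepth μ J (xr r)
      = ∑ j ∈ Finset.Icc 2 J, (1 - (1 - stdPhi r) ^ j - stdPhi r ^ j) := by
    intro r
    rw [modBandDepth]
    refine Finset.sum_congr rfl fun j hj => ?_
    obtain ⟨hj2, hjJ⟩ := Finset.mem_Icc.mp hj
    have hq0 := stdPhi_nonneg r
    have hq1 := stdPhi_le_one r
    -- the time-space event set is measurable
    have hS1 : MeasurableSet {p : C(unitI, ℝ) × unitI | p.1 p.2 ≤ xr r p.2} :=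
      (isClosed_le continuous_eval
        ((xr r).continuous.comp continuous_snd)).measurableSet
    have hS2 : MeasurableSet {p : C(unitI, ℝ) × unitI | xr r p.2 ≤ p.1 p.2} :=
      (isClosed_le ((xr r).continuous.comp continuous_snd)
        continuous_eval).measurableSet
    have hproj : ∀ i : Fin J, Measurable
        fun p : (Fin J → C(unitI, ℝ)) × unitI => (p.1 i, p.2) := fun i =>
      ((measurable_pi_apply i).comp measurable_fst).prodMk measurable_snd
    have hSeq : {p : (Fin J → C(unitI, ℝ)) × unitI |
          (∃ i : Fin J, (i : ℕ) < j ∧ p.1 i p.2 ≤ xr r p.2) ∧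
          (∃ i : Fin J, (i : ℕ) < j ∧ xr r p.2 ≤ p.1 i p.2)}
        = (⋃ i : Fin J, ⋃ _ : (i : ℕ) < j, (fun p : (Fin J → C(unitI, ℝ)) × unitI =>
              (p.1 i, p.2)) ⁻¹' {p : C(unitI, ℝ) × unitI | p.1 p.2 ≤ xr r p.2})
          ∩ (⋃ i : Fin J, ⋃ _ : (i : ℕ) < j, (fun p : (Fin J → C(unitI, ℝ)) × unitI =>
              (p.1 i, p.2)) ⁻¹' {p : C(unitI, ℝ) × unitI | xr r p.2 ≤ p.1 p.2}) := by
      ext p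
      simp only [Set.mem_setOf_eq, Set.mem_inter_iff, Set.mem_iUnion, Set.mem_preimage,
        exists_prop]
    have hS : MeasurableSet {p : (Fin J → C(unitI, ℝ)) × unitI |
          (∃ i : Fin J, (i : ℕ) < j ∧ p.1 i p.2 ≤ xr r p.2) ∧
          (∃ i : Fin J, (i : ℕ) < j ∧ xr r p.2 ≤ p.1 i p.2)} := by
      rw [hSeq]
      exact (MeasurableSet.iUnion fun i => MeasurableSet.iUnion fun _ => (hproj i) hS1).inter
        (MeasurableSet.iUnion fun i => MeasurableSet.iUnion fun _ => (hproj i) hS2)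
    -- a.e. section probability
    have hsec : ∀ᵐ t : unitI ∂(volume : Measure unitI),
        Measure.pi (fun _ : Fin J => μ)
          ((fun ω => (ω, t)) ⁻¹' {p : (Fin J → C(unitI, ℝ)) × unitI |
            (∃ i : Fin J, (i : ℕ) < j ∧ p.1 i p.2 ≤ xr r p.2) ∧
            (∃ i : Fin J, (i : ℕ) < j ∧ xr r p.2 ≤ p.1 i p.2)})
        = ENNReal.ofReal (1 - (1 - stdPhi r) ^ j - stdPhi r ^ j) := by
      filter_upwards [unitI_ae_pos] with t ht
      have hAgt : MeasurableSet {z : C(unitI, ℝ) | xr r t < z t} :=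
        (hevalm t) measurableSet_Ioi
      have hAlt : MeasurableSet {z : C(unitI, ℝ) | z t < xr r t} :=
        (hevalm t) measurableSet_Iio
      have hEgt : MeasurableSet {ω : Fin J → C(unitI, ℝ) |
          ∀ i : Fin J, (i : ℕ) < j → ω i ∈ {z : C(unitI, ℝ) | xr r t < z t}} := by
        have : {ω : Fin J → C(unitI, ℝ) |
            ∀ i : Fin J, (i : ℕ) < j → ω i ∈ {z : C(unitI, ℝ) | xr r t < z t}}
            = ⋂ i : Fin J, ⋂ _ : (i : ℕ) < j,
              (fun ω : Fin J → C(unitI, ℝ) => ω i) ⁻¹' {z : C(unitI, ℝ) | xr r t < z t} := by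
          ext ω; simp [Set.mem_iInter]
        rw [this]
        exact MeasurableSet.iInter fun i => MeasurableSet.iInter fun _ =>
          (measurable_pi_apply i) hAgt
      have hElt : MeasurableSet {ω : Fin J → C(unitI, ℝ) |
          ∀ i : Fin J, (i : ℕ) < j → ω i ∈ {z : C(unitI, ℝ) | z t < xr r t}} := by
        have : {ω : Fin J → C(unitI, ℝ) |
            ∀ i : Fin J, (i : ℕ) < j → ω i ∈ {z : C(unitI, ℝ) | z t < xr r t}}
            = ⋂ i : Fin J, ⋂ _ : (i : ℕ) < j,
              (fun ω : Fin J → C(unitI, ℝ) => ω i) ⁻¹' {z : C(unitI, ℝ) | z t < xr r t} := by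
          ext ω; simp [Set.mem_iInter]
        rw [this]
        exact MeasurableSet.iInter fun i => MeasurableSet.iInter fun _ =>
          (measurable_pi_apply i) hAlt
      have hpre : (fun ω => (ω, t)) ⁻¹' {p : (Fin J → C(unitI, ℝ)) × unitI |
            (∃ i : Fin J, (i : ℕ) < j ∧ p.1 i p.2 ≤ xr r p.2) ∧
            (∃ i : Fin J, (i : ℕ) < j ∧ xr r p.2 ≤ p.1 i p.2)}
          = ({ω : Fin J → C(unitI, ℝ) |
                ∀ i : Fin J, (i : ℕ) < j → ω i ∈ {z : C(unitI, ℝ) | xr r t < z t}}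
             ∪ {ω : Fin J → C(unitI, ℝ) |
                ∀ i : Fin J, (i : ℕ) < j → ω i ∈ {z : C(unitI, ℝ) | z t < xr r t}})ᶜ := by
        ext ω
        simp only [Set.mem_preimage, Set.mem_setOf_eq, Set.mem_compl_iff, Set.mem_union,
          not_or, not_forall, not_lt, exists_prop]
      have hdisj : Disjoint
          {ω : Fin J → C(unitI, ℝ) |
            ∀ i : Fin J, (i : ℕ) < j → ω i ∈ {z : C(unitI, ℝ) | xr r t < z t}}
          {ω : Fin J → C(unitI, ℝ) |
            ∀ i : Fin J, (i : ℕ) < j → ω i ∈ {z : C(unitI, ℝ) | z t < xr r t}} := by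
        rw [Set.disjoint_left]
        intro ω h1 h2
        simp only [Set.mem_setOf_eq] at h1 h2
        have h0J : 0 < J := by omega
        have ha := h1 ⟨0, h0J⟩ (by show (0:ℕ) < j; omega)
        have hb := h2 ⟨0, h0J⟩ (by show (0:ℕ) < j; omega)
        exact absurd (ha.trans hb) (lt_irrefl _)
      rw [hpre, prob_compl_eq_one_sub (hEgt.union hElt), measure_union hdisj hElt,
        pi_forall_lt hjJ μ hAgt, pi_forall_lt hjJ μ hAlt, hmu_gt r t ht, hmu_lt r t ht,
        ← ENNReal.ofReal_pow (by linarith), ← ENNReal.ofReal_pow hq0,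
        ← ENNReal.ofReal_add (pow_nonneg (by linarith) _) (pow_nonneg hq0 _),
        ← ENNReal.ofReal_one,
        ← ENNReal.ofReal_sub _ (add_nonneg (pow_nonneg (by linarith) _) (pow_nonneg hq0 _))]
      congr 1
      ring
    have hc : 0 ≤ 1 - (1 - stdPhi r) ^ j - stdPhi r ^ j := by
      have h1 : stdPhi r ^ j ≤ stdPhi r :=
        pow_le_of_le_one hq0 hq1 (by omega)
      have h2 : (1 - stdPhi r) ^ j ≤ 1 - stdPhi r :=
        pow_le_of_le_one (by linarith) (by linarith) (by omega)
      linarith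
    exact aux_fubini (Measure.pi fun _ : Fin J => μ) hS hc hsec
  refine ⟨?_, ?_, ?_⟩
  · -- modified band depth takes all values in (0, A_J]
    intro v hv
    set m : ℝ → ℝ := fun q => ∑ j ∈ Finset.Icc 2 J, (1 - (1 - q) ^ j - q ^ j) with hm
    have hmcont : Continuous m := by
      apply continuous_finset_sum
      intro j _
      exact (continuous_const.sub ((continuous_const.sub continuous_id).pow j)).sub
        (continuous_id.pow j)
    have hm0 : m 0 = 0 := by
      rw [hm]
      refine Finset.sum_eq_zero fun j hj => ?_
      obtain ⟨hj2, -⟩ := Finset.mem_Icc.mp hj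
      have hjne : j ≠ 0 := by omega
      simp [zero_pow hjne]
    have hm12 : m (1/2) = (J : ℝ) - 2 + (2:ℝ) ^ ((1 : ℤ) - (J : ℤ)) := sum_half_identity J hJ
    have hsub := intermediate_value_Icc (by norm_num : (0:ℝ) ≤ 1/2) hmcont.continuousOn
    have hvmem : v ∈ Set.Icc (m 0) (m (1/2)) := by
      rw [hm0, hm12]; exact ⟨hv.1.le, hv.2⟩
    obtain ⟨q, hqmem, hqv⟩ := hsub hvmem
    have hq0 : 0 < q := by
      rcases eq_or_lt_of_le hqmem.1 with h | h
      · exfalso; rw [← h, hm0] at hqv; linarith [hv.1]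
      · exact h
    have hq1 : q < 1 := lt_of_le_of_lt hqmem.2 (by norm_num)
    obtain ⟨r, hr⟩ := stdPhi_surjOn q ⟨hq0, hq1⟩
    exact ⟨xr r, by rw [hMBD r, hr]; exact hqv⟩
  · -- modified half-region depth takes all values in (0, 1/2]
    intro v hv
    obtain ⟨r, hr⟩ := stdPhi_surjOn v ⟨hv.1, lt_of_le_of_lt hv.2 (by norm_num)⟩
    refine ⟨xr r, ?_⟩
    rw [hMHRD r, hr, min_eq_left (by linarith [hv.2])]
  · -- integrated depth takes all values in ψ((0,1))
    rintro v ⟨q, hq, rfl⟩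
    obtain ⟨r, hr⟩ := stdPhi_surjOn q hq
    exact ⟨xr r, by rw [hID r, hr]⟩
end
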